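/- arXiv:2410.02322 — 8 statements merged into one kernel-verified Lean document; each statement's English description precedes it below -/
import Mathlib

section
/- Let A be an abelian category, X a class of objects in A, and Y an object. A short exact sequence 0 → X → E → Y → 0 with X ∈ add X is a universal extension from Y to X (i.e. the connecting map Hom(X, X') → Ext¹(Y, X') is surjective for every X' ∈ X) if and only if for every short exact sequence 0 → X' → E' → Y → 0 with X' ∈ X there exist morphisms X → X' and E → E' making the left square a pushout square and the right square commute over the identity of Y. -/
open CategoryTheory Limits ZeroObject

attribute [local instance] CategoryTheory.Limits.HasFiniteBiproducts.of_hasFiniteProducts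

universe w v u

variable {A : Type u} [Category.{v} A] [Abelian A]

/-- `i : X ⟶ E` and `p : E ⟶ Y` form a short exact sequence `0 → X → E → Y → 0`. -/
def IsShortExactSeq {X E Y : A} (i : X ⟶ E) (p : E ⟶ Y) : Prop :=
  ∃ w : i ≫ p = 0, (ShortComplex.mk i p w).ShortExact

/-- A torsion pair `(𝒯, ℱ)` in an abelian category. -/
structure TorsionPair (A : Type u) [Category.{v} A] [Abelian A] where
  tors : Set A
  free : Set A
  hom_vanish : ∀ {T F : A}, T ∈ tors → F ∈ free → ∀ f : T ⟶ F, f = 0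
  exists_seq : ∀ X : A, ∃ (tX fX : A) (i : tX ⟶ X) (p : X ⟶ fX),
      tX ∈ tors ∧ fX ∈ free ∧ IsShortExactSeq i p

/-- `M` lies in `add 𝒳`: it is a direct summand of a finite direct sum of objects of `𝒳`. -/
def InAdd (𝒳 : Set A) (M : A) : Prop :=
  ∃ (n : ℕ) (g : Fin n → A) (s : M ⟶ ⨁ g) (r : (⨁ g) ⟶ M),
    (∀ j, g j ∈ 𝒳) ∧ s ≫ r = 𝟙 M

/-- `Ext¹(Z, W) = 0`, expressed by the splitting of all short exact sequences
`0 → W → U → Z → 0`. -/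
def Ext1Vanishes (Z W : A) : Prop :=
  ∀ ⦃U : A⦄ (i : W ⟶ U) (p : U ⟶ Z), IsShortExactSeq i p → ∃ r : U ⟶ W, i ≫ r = 𝟙 W

/-- A short exact sequence `0 → X → E → Y → 0` with `X ∈ add 𝒳` is a universal extension
from `Y` to `𝒳` if every short exact sequence `0 → X' → U → Y → 0` with `X' ∈ 𝒳` is a
pushout of it, i.e. the connecting map `Hom(X, X') → Ext¹(Y, X')` is surjective. -/
def IsUniversalExtension (𝒳 : Set A) {X E Y : A} (i : X ⟶ E) (p : E ⟶ Y) : Prop :=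
  InAdd 𝒳 X ∧ IsShortExactSeq i p ∧
  ∀ ⦃X' U : A⦄ (i' : X' ⟶ U) (p' : U ⟶ Y), X' ∈ 𝒳 → IsShortExactSeq i' p' →
    ∃ (φ : X ⟶ X') (ψ : E ⟶ U), i ≫ ψ = φ ≫ i' ∧ ψ ≫ p' = p

/-- `Y` admits a universal extension to `𝒳`. -/
def AdmitsUniversalExtension (𝒳 : Set A) (Y : A) : Prop :=
  ∃ (X E : A) (i : X ⟶ E) (p : E ⟶ Y), IsUniversalExtension 𝒳 i p

/-- A morphism is right minimal if precomposing with an endomorphism which fixes it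
forces the endomorphism to be an automorphism. -/
def RightMinimal {E Y : A} (p : E ⟶ Y) : Prop :=
  ∀ g : E ⟶ E, g ≫ p = p → IsIso g

/-- A Krull–Schmidt category: every object is a finite direct sum of objects
with local endomorphism rings. -/
def KrullSchmidt (A : Type u) [Category.{v} A] [Abelian A] : Prop :=
  ∀ X : A, ∃ (n : ℕ) (g : Fin n → A),
    (∀ j, IsLocalRing (End (g j))) ∧ Nonempty (X ≅ ⨁ g)

/-- `f : M ⟶ X` is a left `𝒳`-approximation of `M`. -/
def IsLeftApprox (𝒳 : Set A) {M X : A} (f : M ⟶ X) : Prop :=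
  X ∈ 𝒳 ∧ ∀ ⦃X' : A⦄, X' ∈ 𝒳 → ∀ g : M ⟶ X', ∃ h : X ⟶ X', f ≫ h = g

/-- `f : X ⟶ M` is a right `𝒳`-approximation of `M`. -/
def IsRightApprox (𝒳 : Set A) {X M : A} (f : X ⟶ M) : Prop :=
  X ∈ 𝒳 ∧ ∀ ⦃X' : A⦄, X' ∈ 𝒳 → ∀ g : X' ⟶ M, ∃ h : X' ⟶ X, h ≫ f = g

/-- `𝒳` is covariantly finite: every object admits a left `𝒳`-approximation. -/
def CovariantlyFinite (𝒳 : Set A) : Prop :=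
  ∀ M : A, ∃ (X : A) (f : M ⟶ X), IsLeftApprox 𝒳 f

/-- `𝒳` is contravariantly finite: every object admits a right `𝒳`-approximation. -/
def ContravariantlyFinite (𝒳 : Set A) : Prop :=
  ∀ M : A, ∃ (X : A) (f : X ⟶ M), IsRightApprox 𝒳 f

/-- `𝒳` is functorially finite. -/
def FunctoriallyFinite (𝒳 : Set A) : Prop :=
  CovariantlyFinite 𝒳 ∧ ContravariantlyFinite 𝒳

/-- The left Ext-orthogonal `^{⊥_E}𝒯` of the torsion class of a torsion pair. -/
def perpE (P : TorsionPair A) : Set A :=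
  {X | ∀ T ∈ P.tors, Ext1Vanishes X T}

/-- In a morphism of short exact sequences over the identity of `Y`, the left-hand
square is automatically a pushout square. -/
lemma isPushout_of_ses {X E Y X' U : A} (i : X ⟶ E) (p : E ⟶ Y) (i' : X' ⟶ U) (p' : U ⟶ Y)
    (hse : IsShortExactSeq i p) (hse' : IsShortExactSeq i' p')
    (φ : X ⟶ X') (ψ : E ⟶ U) (w : i ≫ ψ = φ ≫ i') (hp : ψ ≫ p' = p) :
    IsPushout i φ ψ i' := by
  obtain ⟨w1, hS⟩ := hse
  obtain ⟨w1', hS'⟩ := hse'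
  have hmono_i' : Mono i' := hS'.mono_f
  have hepi_p : Epi p := hS.epi_g
  -- The map `E ⊞ X' ⟶ U` is an epimorphism.
  have hgepi : Epi (biprod.desc ψ i') := by
    rw [Preadditive.epi_iff_cancel_zero]
    intro Q c hc
    have hi'c : i' ≫ c = 0 := by
      have := biprod.inr ≫= hc
      simpa using this
    have hψc : ψ ≫ c = 0 := by
      have := biprod.inl ≫= hc
      simpa using this
    obtain ⟨t, ht⟩ := CokernelCofork.IsColimit.desc' hS'.gIsCokernel c hi'c
    have hpt : p ≫ t = 0 := by
      rw [← hp, Category.assoc]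
      change p' ≫ t = c at ht
      rw [ht, hψc]
    have : t = 0 := by
      rw [← cancel_epi p, hpt, comp_zero]
    change p' ≫ t = c at ht
    rw [← ht, this, comp_zero]
  -- The comparison map `X ⟶ ker (E ⊞ X' ⟶ U)` is a split epimorphism.
  have hlz : biprod.lift i (-φ) ≫ biprod.desc ψ i' = 0 := by
    simp [w]
  set g : E ⊞ X' ⟶ U := biprod.desc ψ i' with hg
  set ι : kernel g ⟶ E ⊞ X' := kernel.ι g with hι
  set u : X ⟶ kernel g := kernel.lift g (biprod.lift i (-φ)) hlz with hu
  have huι : u ≫ ι = biprod.lift i (-φ) := kernel.lift_ι _ _ _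
  have hιg : ι ≫ g = 0 := kernel.condition g
  have hdesc : g = biprod.fst ≫ ψ + biprod.snd ≫ i' := by
    apply biprod.hom_ext' <;> simp [hg]
  have hιsum : ι ≫ biprod.fst ≫ ψ + ι ≫ biprod.snd ≫ i' = 0 := by
    have h0 : ι ≫ (biprod.fst ≫ ψ + biprod.snd ≫ i') = 0 := by
      rw [← hdesc]; exact hιg
    rw [Preadditive.comp_add] at h0
    simpa using h0
  have hep : (ι ≫ biprod.fst) ≫ p = 0 := by
    have h1 : ι ≫ biprod.fst ≫ ψ = -(ι ≫ biprod.snd ≫ i') := by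
      rw [eq_neg_iff_add_eq_zero]; exact hιsum
    calc (ι ≫ biprod.fst) ≫ p = (ι ≫ biprod.fst ≫ ψ) ≫ p' := by
          rw [← hp]; simp [Category.assoc]
      _ = (-(ι ≫ biprod.snd ≫ i')) ≫ p' := by rw [h1]
      _ = -(ι ≫ biprod.snd ≫ (i' ≫ p')) := by simp [Category.assoc]
      _ = 0 := by rw [w1']; simp
  obtain ⟨x, hx⟩ := KernelFork.IsLimit.lift' hS.fIsKernel (ι ≫ biprod.fst) hep
  change x ≫ i = ι ≫ biprod.fst at hx
  have hxu : x ≫ u = 𝟙 (kernel g) := by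
    rw [← cancel_mono ι, Category.assoc, huι, Category.id_comp]
    apply biprod.hom_ext
    · simpa using hx
    · have h1 : ι ≫ biprod.fst ≫ ψ = -(ι ≫ biprod.snd ≫ i') := by
        rw [eq_neg_iff_add_eq_zero]; exact hιsum
      have h2 : x ≫ φ = -(ι ≫ biprod.snd) := by
        rw [← cancel_mono i', Category.assoc, ← w, ← Category.assoc, hx,
          Category.assoc, h1]
        simp
      simp [h2]
  have huepi : Epi u := by
    have : IsSplitEpi u := ⟨⟨⟨x, hxu⟩⟩⟩
    infer_instance
  -- `g` is the cokernel of `biprod.lift i (-φ)`.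
  have hcoker : IsColimit (CokernelCofork.ofπ g hlz) := by
    have h1 : IsColimit (CokernelCofork.ofπ g hιg) :=
      Abelian.epiIsCokernelOfKernel (KernelFork.ofι ι (kernel.condition g))
        (kernelIsKernel g)
    have h2 := isCokernelEpiComp h1 u huι.symm
    exact IsColimit.ofIsoColimit h2 (Cofork.ext (Iso.refl _) (by simp))
  have sq : CommSq i φ ψ i' := ⟨w⟩
  refine ⟨sq, ⟨?_⟩⟩
  exact sq.isColimitEquivIsColimitCokernelCofork.symm
    (IsColimit.ofIsoColimit hcoker (Cofork.ext (Iso.refl _) (by simp [hg])))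

/-- A short exact sequence `0 → X → E → Y → 0` with `X ∈ add 𝒳` is a universal extension
from `Y` to `𝒳` (surjectivity of `Hom(X, X') → Ext¹(Y, X')` for `X' ∈ 𝒳`, expressed as:
every extension of `Y` by an object of `𝒳` receives a morphism of short exact sequences
over the identity of `Y`) if and only if for every short exact sequence
`0 → X' → E' → Y → 0` with `X' ∈ 𝒳` there are morphisms `X ⟶ X'` and `E ⟶ E'` making
the left-hand square a pushout square and the right-hand square commute over `𝟙 Y`. -/
theorem stmt2 {𝒳 : Set A} {X E Y : A}
    (i : X ⟶ E) (p : E ⟶ Y) (hX : InAdd 𝒳 X) (hse : IsShortExactSeq i p) :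
    (∀ ⦃X' U : A⦄ (i' : X' ⟶ U) (p' : U ⟶ Y), X' ∈ 𝒳 → IsShortExactSeq i' p' →
        ∃ (φ : X ⟶ X') (ψ : E ⟶ U), i ≫ ψ = φ ≫ i' ∧ ψ ≫ p' = p) ↔
    (∀ ⦃X' U : A⦄ (i' : X' ⟶ U) (p' : U ⟶ Y), X' ∈ 𝒳 → IsShortExactSeq i' p' →
        ∃ (φ : X ⟶ X') (ψ : E ⟶ U), IsPushout i φ ψ i' ∧ ψ ≫ p' = p) := by
  constructor
  · intro h X' U i' p' hX' hse'
    obtain ⟨φ, ψ, hw, hp⟩ := h i' p' hX' hse'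
    exact ⟨φ, ψ, isPushout_of_ses i p i' p' hse hse' φ ψ hw hp, hp⟩
  · intro h X' U i' p' hX' hse'
    obtain ⟨φ, ψ, hpo, hp⟩ := h i' p' hX' hse'
    exact ⟨φ, ψ, hpo.w, hp⟩
end

section
/- Let A be an abelian category with enough projectives and X a covariantly finite subcategory of A (every object admits a left X-approximation). Then every object A of A admits a universal extension to X, i.e. a short exact sequence 0 → X → E → A → 0 with X ∈ X such that Hom(X, X') → Ext¹(A, X') is surjective for all X' ∈ X. -/
open CategoryTheory Limits ZeroObject

attribute [local instance] CategoryTheory.Limits.HasFiniteBiproducts.of_hasFiniteProducts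

universe w v u

variable {A : Type u} [Category.{v} A] [Abelian A]

/-- If `A` has enough projectives and `𝒳` is covariantly finite, then every object
admits a universal extension to `𝒳`. -/
theorem stmt3 [EnoughProjectives A] {𝒳 : Set A} (h𝒳 : CovariantlyFinite 𝒳) (Y : A) :
    ∃ (X E : A) (i : X ⟶ E) (p : E ⟶ Y), X ∈ 𝒳 ∧ IsShortExactSeq i p ∧
      ∀ ⦃X' U : A⦄ (i' : X' ⟶ U) (p' : U ⟶ Y), X' ∈ 𝒳 → IsShortExactSeq i' p' →
        ∃ (φ : X ⟶ X') (ψ : E ⟶ U), i ≫ ψ = φ ≫ i' ∧ ψ ≫ p' = p := by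
  classical
  obtain ⟨P, π, hπ1, hπ2⟩ : ∃ (P : A) (π : P ⟶ Y), Epi π ∧ Projective P :=
    ⟨_, Projective.π Y, inferInstance, inferInstance⟩
  haveI := hπ1; haveI := hπ2
  obtain ⟨X, f, hX𝒳, happrox⟩ := h𝒳 (kernel π)
  have hkπ : kernel.ι π ≫ π = 0 := kernel.condition π
  have hzero : kernel.ι π ≫ π = f ≫ (0 : X ⟶ Y) := by rw [hkπ, comp_zero]
  refine ⟨X, pushout (kernel.ι π) f, pushout.inr (kernel.ι π) f,
    pushout.desc π 0 hzero, hX𝒳, ?_, ?_⟩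
  · -- short exactness
    have hinr_p : pushout.inr (kernel.ι π) f ≫ pushout.desc π 0 hzero = 0 :=
      pushout.inr_desc _ _ _
    have hinl_p : pushout.inl (kernel.ι π) f ≫ pushout.desc π 0 hzero = π :=
      pushout.inl_desc _ _ _
    have hepi : Epi (pushout.desc π 0 hzero) := epi_of_epi_fac hinl_p
    have hmono : Mono (pushout.inr (kernel.ι π) f) :=
      Abelian.mono_pushout_of_mono_f (kernel.ι π) f
    have hcoker : IsColimit (CokernelCofork.ofπ (pushout.desc π 0 hzero) hinr_p) := by
      refine CokernelCofork.IsColimit.ofπ' _ hinr_p (fun {T} t ht => ?_)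
      have hkt : kernel.ι π ≫ (pushout.inl (kernel.ι π) f ≫ t) = 0 := by
        rw [← Category.assoc, pushout.condition, Category.assoc, ht, comp_zero]
      obtain ⟨d, hd⟩ := CokernelCofork.IsColimit.desc'
        (Abelian.epiIsCokernelOfKernel _ (kernelIsKernel π))
        (pushout.inl (kernel.ι π) f ≫ t) hkt
      dsimp at hd
      refine ⟨d, ?_⟩
      apply pushout.hom_ext
      · rw [← Category.assoc, hinl_p, hd]
      · rw [← Category.assoc, hinr_p, zero_comp, ht]
    refine ⟨hinr_p, ?_⟩
    exact { exact := ShortComplex.exact_of_g_is_cokernel _ hcoker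
            mono_f := hmono
            epi_g := hepi }
  · intro X' U i' p' hX' hse'
    obtain ⟨w', hw'⟩ := hse'
    haveI : Epi p' := hw'.epi_g
    haveI : Mono i' := hw'.mono_f
    have hα : Projective.factorThru π p' ≫ p' = π := Projective.factorThru_comp π p'
    have hkα : (kernel.ι π ≫ Projective.factorThru π p') ≫ p' = 0 := by
      rw [Category.assoc, hα, hkπ]
    have hβ := hw'.exact.lift_f (kernel.ι π ≫ Projective.factorThru π p') hkα
    obtain ⟨φ, hφ⟩ := happrox hX'
      (hw'.exact.lift (kernel.ι π ≫ Projective.factorThru π p') hkα)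
    have hcomm : kernel.ι π ≫ Projective.factorThru π p' = f ≫ (φ ≫ i') := by
      rw [← Category.assoc, hφ, hβ]
    refine ⟨φ, pushout.desc (Projective.factorThru π p') (φ ≫ i') hcomm, ?_, ?_⟩
    · exact pushout.inr_desc _ _ _
    · apply pushout.hom_ext
      · rw [← Category.assoc, pushout.inl_desc, hα, pushout.inl_desc]
      · rw [← Category.assoc, pushout.inr_desc, Category.assoc, w', comp_zero, pushout.inr_desc]
end

section
/- Let A be an abelian Krull–Schmidt category and X a class of objects. A universal extension 0 → X → E → Y → 0 from Y to X (with X additively closed) is minimal (i.e. E → Y is right minimal) if and only if E has no nonzero direct summand belonging to X that is contained in the kernel, equivalently the sequence has no direct summand of the form 0 → X' → X' → 0 → 0 with X' ∈ X. -/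
open CategoryTheory Limits ZeroObject

attribute [local instance] CategoryTheory.Limits.HasFiniteBiproducts.of_hasFiniteProducts

universe w v u

variable {A : Type u} [Category.{v} A] [Abelian A]

section AuxRing

variable {R : Type*} [Ring R] [IsLocalRing R]

lemma aux_unit_add {a b : R} (h : IsUnit (a + b)) : IsUnit a ∨ IsUnit b := by
  obtain ⟨u, hu⟩ := h
  have h1 : a * ↑u⁻¹ + b * ↑u⁻¹ = 1 := by
    rw [← add_mul, ← hu, Units.mul_inv]
  rcases IsLocalRing.isUnit_or_isUnit_of_add_one h1 with h2 | h2
  · left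
    have := h2.mul u.isUnit
    rwa [mul_assoc, Units.inv_mul, mul_one] at this
  · right
    have := h2.mul u.isUnit
    rwa [mul_assoc, Units.inv_mul, mul_one] at this

lemma aux_idem {e : R} (he : e * e = e) : e = 0 ∨ e = 1 := by
  rcases IsLocalRing.isUnit_or_isUnit_of_add_one (show e + (1 - e) = 1 by abel) with h | h
  · right; exact h.mul_left_cancel (by rw [he, mul_one])
  · left
    have h2 : (1 - e) * (1 - e) = (1 - e) * 1 := by
      rw [mul_one, sub_mul, one_mul, mul_sub, mul_one, he]
      abel
    have h3 : (1 : R) - e = 1 := h.mul_left_cancel h2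
    exact sub_eq_self.mp h3

end AuxRing

section AuxCat

variable {U V W : A}

lemma aux_isIso_of_retract [Nontrivial (End U)] [IsLocalRing (End V)]
    (c : U ⟶ V) (r : V ⟶ U) (h : c ≫ r = 𝟙 U) : IsIso c := by
  let a : End V := r ≫ c
  have he : a * a = a := by
    show (r ≫ c) ≫ (r ≫ c) = r ≫ c
    rw [Category.assoc, ← Category.assoc c r c, h, Category.id_comp]
  rcases aux_idem he with h0 | h1
  · exfalso
    have hrc : r ≫ c = (0 : V ⟶ V) := h0
    have hc : c = 0 := by
      have h2 : c ≫ (r ≫ c) = c := by rw [← Category.assoc, h, Category.id_comp]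
      rw [hrc, Limits.comp_zero] at h2
      exact h2.symm
    have h3 : (1 : End U) = 0 := by
      show 𝟙 U = (0 : U ⟶ U)
      rw [← h, hc, Limits.zero_comp]
    exact one_ne_zero h3
  · have h1' : r ≫ c = 𝟙 V := h1
    exact ⟨r, h, h1'⟩

lemma aux_isIso_of_unit_comp [Nontrivial (End U)] [IsLocalRing (End V)]
    (x : U ⟶ V) (t : V ⟶ U) (hun : IsUnit (show End U from x ≫ t)) : IsIso x := by
  obtain ⟨u, hu⟩ := hun
  have h2 : (↑u⁻¹ : End U) * (show End U from x ≫ t) = 1 := by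
    rw [← hu, Units.inv_mul]
  have h3 : x ≫ (t ≫ (↑u⁻¹ : End U)) = 𝟙 U := by
    rw [← Category.assoc]
    exact h2
  exact aux_isIso_of_retract x _ h3

lemma aux_rad_comp [Nontrivial (End U)] [IsLocalRing (End V)]
    {c : U ⟶ V} (hc : ¬ IsIso c) (w : V ⟶ W) (hiso : IsIso (c ≫ w)) : False := by
  apply hc
  exact aux_isIso_of_retract c (w ≫ inv (c ≫ w))
    (by rw [← Category.assoc, IsIso.hom_inv_id])

lemma aux_rad_sub [IsLocalRing (End U)] [IsLocalRing (End V)]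
    {x y : U ⟶ V} (hx : ¬ IsIso x) (hy : ¬ IsIso y) : ¬ IsIso (x - y) := by
  intro hz
  let a : End U := x ≫ inv (x - y)
  let b : End U := -(y ≫ inv (x - y))
  have h1 : a + b = 1 := by
    show x ≫ inv (x - y) + -(y ≫ inv (x - y)) = 𝟙 U
    rw [← sub_eq_add_neg, ← Preadditive.sub_comp, IsIso.hom_inv_id]
  rcases IsLocalRing.isUnit_or_isUnit_of_add_one h1 with hB | hB
  · exact hx (aux_isIso_of_unit_comp x (inv (x - y)) hB)
  · refine hy (aux_isIso_of_unit_comp y (inv (x - y)) ?_)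
    have h4 : IsUnit (-b) := hB.neg
    have h5 : -b = (show End U from y ≫ inv (x - y)) := neg_neg _
    rwa [h5] at h4

lemma aux_unit_sub [IsLocalRing (End U)] {x m : U ⟶ U}
    (hx : IsIso x) (hm : ¬ IsIso m) : IsIso (x - m) := by
  have hxu : IsUnit (show End U from x) := (isUnit_iff_isIso x).2 hx
  have hmu : ¬ IsUnit (show End U from m) := fun hu => hm ((isUnit_iff_isIso m).1 hu)
  let d : End U := x - m
  have hdm : d + (show End U from m) = (show End U from x) := by
    show (x - m) + m = x
    abel
  rcases aux_unit_add (a := d) (b := (show End U from m)) (by rw [hdm]; exact hxu) with h | h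
  · exact (isUnit_iff_isIso (x - m)).1 h
  · exact absurd h hmu

lemma aux_isIso_neg {f : U ⟶ V} (h : IsIso f) : IsIso (-f) :=
  ⟨-(inv f), by simp, by simp⟩

end AuxCat


lemma aux_gauss {X₁ X₂ Y₁ Y₂ : A} (f₁₁ : X₁ ⟶ Y₁) (f₁₂ : X₁ ⟶ Y₂) (f₂₁ : X₂ ⟶ Y₁)
    (f₂₂ : X₂ ⟶ Y₂) [IsIso f₁₁] :
    (Biprod.unipotentLower (-f₂₁ ≫ inv f₁₁)).hom ≫ Biprod.ofComponents f₁₁ f₁₂ f₂₁ f₂₂ ≫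
        (Biprod.unipotentUpper (-(inv f₁₁) ≫ f₁₂)).hom
      = biprod.map f₁₁ (f₂₂ - f₂₁ ≫ inv f₁₁ ≫ f₁₂) := by
  ext <;> simp <;> abel

/-- Splitting off the first summand of a `Fin (n+1)`-indexed biproduct. -/
noncomputable def splitIso {n : ℕ} (Es : Fin (n + 1) → A) :
    (⨁ Es) ≅ (Es 0 ⊞ ⨁ (fun j : Fin n => Es j.succ)) where
  hom := biprod.lift (biproduct.π Es 0) (biproduct.lift fun j : Fin n => biproduct.π Es j.succ)
  inv := biprod.desc (biproduct.ι Es 0) (biproduct.desc fun j : Fin n => biproduct.ι Es j.succ)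
  hom_inv_id := by
    rw [biprod.lift_desc, biproduct.lift_desc, ← biproduct.total, Fin.sum_univ_succ]
  inv_hom_id := by
    ext <;>
      simp [biproduct.ι_π, Fin.succ_ne_zero, (Fin.succ_ne_zero _).symm, Fin.succ_inj]

lemma keyLemma : ∀ (n : ℕ) (Es : Fin n → A), (∀ j, IsLocalRing (End (Es j))) →
    ∀ (g : ⨁ Es ⟶ ⨁ Es),
    (∀ j, IsIso (biproduct.ι Es j ≫ g ≫ biproduct.π Es j)) →
    (∀ j k, j ≠ k → ¬ IsIso (biproduct.ι Es j ≫ g ≫ biproduct.π Es k)) →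
    IsIso g := by
  intro n
  induction n with
  | zero =>
    intro Es _ g _ _
    have hz : 𝟙 (⨁ Es) = 0 := by
      rw [← biproduct.total]
      simp
    exact ⟨0, by rw [hz]; simp, by rw [hz]; simp⟩
  | succ n ih =>
    intro Es hloc g hdiag hoff
    haveI : ∀ j, IsLocalRing (End (Es j)) := hloc
    set F : Fin n → A := fun j => Es j.succ with hF
    haveI hlocF : ∀ j : Fin n, IsLocalRing (End (F j)) := fun j => hloc j.succ
    set e := splitIso Es with he
    set G : Es 0 ⊞ ⨁ F ⟶ Es 0 ⊞ ⨁ F := e.inv ≫ g ≫ e.hom with hG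
    have hinl : biprod.inl ≫ e.inv = biproduct.ι Es 0 := biprod.inl_desc _ _
    have hinr : biprod.inr ≫ e.inv = biproduct.desc (fun j : Fin n => biproduct.ι Es j.succ) :=
      biprod.inr_desc _ _
    have hfst : e.hom ≫ biprod.fst = biproduct.π Es 0 := biprod.lift_fst _ _
    have hsnd : e.hom ≫ biprod.snd = biproduct.lift (fun j : Fin n => biproduct.π Es j.succ) :=
      biprod.lift_snd _ _
    set f₁₁ : Es 0 ⟶ Es 0 := biprod.inl ≫ G ≫ biprod.fst with hf11
    set f₁₂ : Es 0 ⟶ ⨁ F := biprod.inl ≫ G ≫ biprod.snd with hf12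
    set f₂₁ : ⨁ F ⟶ Es 0 := biprod.inr ≫ G ≫ biprod.fst with hf21
    set f₂₂ : ⨁ F ⟶ ⨁ F := biprod.inr ≫ G ≫ biprod.snd with hf22
    have hf11' : f₁₁ = biproduct.ι Es 0 ≫ g ≫ biproduct.π Es 0 := by
      rw [hf11, hG]
      rw [show biprod.inl ≫ (e.inv ≫ g ≫ e.hom) ≫ biprod.fst
        = (biprod.inl ≫ e.inv) ≫ g ≫ (e.hom ≫ biprod.fst) by simp only [Category.assoc]]
      rw [hinl, hfst]
    have h21 : ∀ j : Fin n, biproduct.ι F j ≫ f₂₁ = biproduct.ι Es j.succ ≫ g ≫ biproduct.π Es 0 := by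
      intro j
      rw [hf21, hG]
      rw [show biproduct.ι F j ≫ biprod.inr ≫ (e.inv ≫ g ≫ e.hom) ≫ biprod.fst
        = (biproduct.ι F j ≫ (biprod.inr ≫ e.inv)) ≫ g ≫ (e.hom ≫ biprod.fst)
          by simp only [Category.assoc]]
      rw [hinr, hfst, biproduct.ι_desc]
    have h12 : ∀ k : Fin n, f₁₂ ≫ biproduct.π F k = biproduct.ι Es 0 ≫ g ≫ biproduct.π Es k.succ := by
      intro k
      rw [hf12, hG]
      rw [show (biprod.inl ≫ (e.inv ≫ g ≫ e.hom) ≫ biprod.snd) ≫ biproduct.π F k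
        = (biprod.inl ≫ e.inv) ≫ g ≫ ((e.hom ≫ biprod.snd) ≫ biproduct.π F k)
          by simp only [Category.assoc]]
      rw [hinl, hsnd, biproduct.lift_π]
    have h22 : ∀ j k : Fin n, biproduct.ι F j ≫ f₂₂ ≫ biproduct.π F k
        = biproduct.ι Es j.succ ≫ g ≫ biproduct.π Es k.succ := by
      intro j k
      rw [hf22, hG]
      rw [show biproduct.ι F j ≫ (biprod.inr ≫ (e.inv ≫ g ≫ e.hom) ≫ biprod.snd) ≫ biproduct.π F k
        = (biproduct.ι F j ≫ (biprod.inr ≫ e.inv)) ≫ g ≫ ((e.hom ≫ biprod.snd) ≫ biproduct.π F k)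
          by simp only [Category.assoc]]
      rw [hinr, hsnd, biproduct.ι_desc, biproduct.lift_π]
    haveI hIso11 : IsIso f₁₁ := by rw [hf11']; exact hdiag 0
    set g' : ⨁ F ⟶ ⨁ F := f₂₂ - f₂₁ ≫ inv f₁₁ ≫ f₁₂ with hg'
    have hcomp : Biprod.ofComponents f₁₁ f₁₂ f₂₁ f₂₂ = G := by
      rw [hf11, hf12, hf21, hf22]
      exact Biprod.ofComponents_eq G
    have w : (Biprod.unipotentLower (-f₂₁ ≫ inv f₁₁)).hom ≫ G
        ≫ (Biprod.unipotentUpper (-(inv f₁₁) ≫ f₁₂)).hom = biprod.map f₁₁ g' := by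
      have hw := aux_gauss f₁₁ f₁₂ f₂₁ f₂₂
      rw [hcomp, ← hg'] at hw
      exact hw
    have hent : ∀ j k : Fin n, biproduct.ι F j ≫ g' ≫ biproduct.π F k
        = (biproduct.ι Es j.succ ≫ g ≫ biproduct.π Es k.succ)
          - (biproduct.ι Es j.succ ≫ g ≫ biproduct.π Es 0)
              ≫ (inv f₁₁ ≫ (biproduct.ι Es 0 ≫ g ≫ biproduct.π Es k.succ)) := by
      intro j k
      rw [hg', Preadditive.sub_comp, Preadditive.comp_sub, h22, ← h21, ← h12]
      congr 1
      simp only [Category.assoc]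
    have hdiag' : ∀ j : Fin n, IsIso (biproduct.ι F j ≫ g' ≫ biproduct.π F j) := by
      intro j
      rw [hent j j]
      refine aux_unit_sub (hdiag j.succ) ?_
      intro hIso
      exact aux_rad_comp (hoff j.succ 0 (Fin.succ_ne_zero j)) _ hIso
    have hoff' : ∀ j k : Fin n, j ≠ k → ¬ IsIso (biproduct.ι F j ≫ g' ≫ biproduct.π F k) := by
      intro j k hjk
      rw [hent j k]
      refine aux_rad_sub (hoff j.succ k.succ (fun hc => hjk (Fin.succ_inj.mp hc))) ?_
      intro hIso
      exact aux_rad_comp (hoff j.succ 0 (Fin.succ_ne_zero j)) _ hIso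
    haveI hIso' : IsIso g' := ih F hlocF g' hdiag' hoff'
    haveI : IsIso (biprod.map f₁₁ g') := by
      have hmap : biprod.map f₁₁ g' = (biprod.mapIso (asIso f₁₁) (asIso g')).hom := rfl
      rw [hmap]
      infer_instance
    haveI hG1 : IsIso ((Biprod.unipotentLower (-f₂₁ ≫ inv f₁₁)).hom ≫ G
        ≫ (Biprod.unipotentUpper (-(inv f₁₁) ≫ f₁₂)).hom) := by
      rw [w]; infer_instance
    haveI hG2 : IsIso (G ≫ (Biprod.unipotentUpper (-(inv f₁₁) ≫ f₁₂)).hom) :=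
      IsIso.of_isIso_comp_left (Biprod.unipotentLower (-f₂₁ ≫ inv f₁₁)).hom _
    haveI hG3 : IsIso G := IsIso.of_isIso_comp_right G
      (Biprod.unipotentUpper (-(inv f₁₁) ≫ f₁₂)).hom
    have : g = e.hom ≫ G ≫ e.inv := by
      rw [hG]
      simp
    rw [this]
    infer_instance

lemma mem_biprod {𝒳 : Set A}
    (hsum : ∀ {X Y : A}, X ∈ 𝒳 → Y ∈ 𝒳 → (X ⊞ Y) ∈ 𝒳)
    (hsummand : ∀ {X Y : A} (s : X ⟶ Y) (r : Y ⟶ X), s ≫ r = 𝟙 X → Y ∈ 𝒳 → X ∈ 𝒳) :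
    ∀ (n : ℕ) (gs : Fin (n + 1) → A), (∀ j, gs j ∈ 𝒳) → (⨁ gs) ∈ 𝒳 := by
  intro n
  induction n with
  | zero =>
    intro gs hgs
    refine hsummand (biproduct.π gs 0) (biproduct.ι gs 0) ?_ (hgs 0)
    rw [← biproduct.total, Fin.sum_univ_one]
  | succ n ih =>
    intro gs hgs
    have h1 : (gs 0 ⊞ ⨁ fun j : Fin (n + 1) => gs j.succ) ∈ 𝒳 :=
      hsum (hgs 0) (ih _ (fun j => hgs j.succ))
    exact hsummand (splitIso gs).hom (splitIso gs).inv (splitIso gs).hom_inv_id h1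


/-- In a Krull–Schmidt abelian category, a universal extension `0 → X → E → Y → 0` to an
additively closed class `𝒳` is minimal (i.e. `E → Y` is right minimal) if and only if `E`
has no nonzero direct summand belonging to `𝒳` and contained in the kernel of `E → Y`,
i.e. the sequence has no direct summand of the form `0 → X' → X' → 0 → 0` with `X' ∈ 𝒳`. -/
theorem stmt4 (hKS : KrullSchmidt A) {𝒳 : Set A}
    (hsum : ∀ {X Y : A}, X ∈ 𝒳 → Y ∈ 𝒳 → (X ⊞ Y) ∈ 𝒳)
    (hsummand : ∀ {X Y : A} (s : X ⟶ Y) (r : Y ⟶ X), s ≫ r = 𝟙 X → Y ∈ 𝒳 → X ∈ 𝒳)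
    {X E Y : A} {i : X ⟶ E} {p : E ⟶ Y} (h : IsUniversalExtension 𝒳 i p) :
    RightMinimal p ↔
      ¬ ∃ X' : A, X' ∈ 𝒳 ∧ ¬ IsZero X' ∧
        ∃ (s : X' ⟶ E) (r : E ⟶ X'), s ≫ r = 𝟙 X' ∧ s ≫ p = 0 := by
  constructor
  · rintro hmin ⟨X', hX', hnz, s, r, hsr, hsp⟩
    have hgp : (𝟙 E - r ≫ s) ≫ p = p := by
      rw [Preadditive.sub_comp, Category.id_comp, Category.assoc, hsp, Limits.comp_zero, sub_zero]
    haveI := hmin _ hgp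
    have hs0 : s = 0 := by
      have h1 : s ≫ (𝟙 E - r ≫ s) = 0 := by
        rw [Preadditive.comp_sub, Category.comp_id, ← Category.assoc, hsr, Category.id_comp,
          sub_self]
      have h2 : s = (s ≫ (𝟙 E - r ≫ s)) ≫ inv (𝟙 E - r ≫ s) := by
        rw [Category.assoc, IsIso.hom_inv_id, Category.comp_id]
      rw [h1, Limits.zero_comp] at h2
      exact h2
    apply hnz
    rw [IsZero.iff_id_eq_zero, ← hsr, hs0, Limits.zero_comp]
  · intro hno g hgp
    by_contra hni
    set hmor : E ⟶ E := 𝟙 E - g with hhm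
    have hh : hmor ≫ p = 0 := by
      rw [hhm, Preadditive.sub_comp, Category.id_comp, hgp, sub_self]
    obtain ⟨n, Es, hloc, ⟨e⟩⟩ := hKS E
    haveI : ∀ j, IsLocalRing (End (Es j)) := hloc
    set G : ⨁ Es ⟶ ⨁ Es := e.inv ≫ g ≫ e.hom with hGdef
    have hG : ¬ IsIso G := by
      intro hIso
      apply hni
      have hge : g = e.hom ≫ G ≫ e.inv := by rw [hGdef]; simp
      rw [hge]; infer_instance
    have key : ∃ j k : Fin n,
        IsIso (biproduct.ι Es j ≫ (e.inv ≫ hmor ≫ e.hom) ≫ biproduct.π Es k) := by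
      by_cases hc : ∀ j, IsIso (biproduct.ι Es j ≫ G ≫ biproduct.π Es j)
      · by_cases hc2 : ∀ j k, j ≠ k → ¬ IsIso (biproduct.ι Es j ≫ G ≫ biproduct.π Es k)
        · exact absurd (keyLemma n Es hloc G hc hc2) hG
        · push_neg at hc2
          obtain ⟨j, k, hjk, hiso⟩ := hc2
          refine ⟨j, k, ?_⟩
          have heq : biproduct.ι Es j ≫ (e.inv ≫ hmor ≫ e.hom) ≫ biproduct.π Es k
              = -(biproduct.ι Es j ≫ G ≫ biproduct.π Es k) := by
            rw [hhm, hGdef]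
            simp [Preadditive.sub_comp, Preadditive.comp_sub, biproduct.ι_π_ne _ hjk]
          rw [heq]
          exact aux_isIso_neg hiso
      · push_neg at hc
        obtain ⟨j, hj⟩ := hc
        refine ⟨j, j, ?_⟩
        have heq : biproduct.ι Es j ≫ (e.inv ≫ hmor ≫ e.hom) ≫ biproduct.π Es j
            = 𝟙 (Es j) - (biproduct.ι Es j ≫ G ≫ biproduct.π Es j) := by
          rw [hhm, hGdef]
          simp [Preadditive.sub_comp, Preadditive.comp_sub]
        let a : End (Es j) := biproduct.ι Es j ≫ G ≫ biproduct.π Es j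
        have h1 : ¬ IsUnit a := fun hu => hj ((isUnit_iff_isIso _).1 hu)
        rcases IsLocalRing.isUnit_or_isUnit_of_add_one (show a + (1 - a) = 1 by abel)
          with h2 | h2
        · exact absurd h2 h1
        · have h3 : IsIso ((1 : End (Es j)) - a) := (isUnit_iff_isIso _).1 h2
          rw [heq]
          exact h3
    obtain ⟨j, k, hiso⟩ := key
    set u := biproduct.ι Es j ≫ (e.inv ≫ hmor ≫ e.hom) ≫ biproduct.π Es k with hudef
    set s : Es j ⟶ E := biproduct.ι Es j ≫ e.inv ≫ hmor with hs
    set r : E ⟶ Es j := e.hom ≫ biproduct.π Es k ≫ inv u with hr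
    have hsr : s ≫ r = 𝟙 (Es j) := by
      rw [hs, hr]
      rw [show (biproduct.ι Es j ≫ e.inv ≫ hmor) ≫ e.hom ≫ biproduct.π Es k ≫ inv u
        = (biproduct.ι Es j ≫ (e.inv ≫ hmor ≫ e.hom) ≫ biproduct.π Es k) ≫ inv u
          by simp only [Category.assoc]]
      rw [← hudef, IsIso.hom_inv_id]
    have hsp : s ≫ p = 0 := by
      rw [hs, Category.assoc, Category.assoc, hh, Limits.comp_zero, Limits.comp_zero]
    have hnz : ¬ IsZero (Es j) := by
      intro hz
      rw [IsZero.iff_id_eq_zero] at hz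
      exact one_ne_zero (α := End (Es j)) hz
    obtain ⟨wXE, hse⟩ := h.2.1
    haveI := hse.mono_f
    set t := hse.exact.lift s hsp with ht
    have htf : t ≫ i = s := hse.exact.lift_f s hsp
    obtain ⟨m, gX, sX, rX, hgX, hXsr⟩ := h.1
    have hcomp : (t ≫ sX) ≫ (rX ≫ i ≫ r) = 𝟙 (Es j) := by
      rw [show (t ≫ sX) ≫ rX ≫ i ≫ r = t ≫ (sX ≫ rX) ≫ i ≫ r by simp only [Category.assoc]]
      rw [hXsr, Category.id_comp, ← Category.assoc, htf, hsr]
    have hmem : Es j ∈ 𝒳 := by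
      cases m with
      | zero =>
        exfalso
        have hz : 𝟙 (⨁ gX) = 0 := by
          rw [← biproduct.total]; simp
        have hid : 𝟙 (Es j) = 0 := by
          rw [← hcomp, show (t ≫ sX) ≫ rX ≫ i ≫ r = (t ≫ sX) ≫ 𝟙 (⨁ gX) ≫ rX ≫ i ≫ r
            by rw [Category.id_comp], hz, Limits.zero_comp, Limits.comp_zero]
        exact one_ne_zero (α := End (Es j)) hid
      | succ m' =>
        exact hsummand (t ≫ sX) (rX ≫ i ≫ r) hcomp (mem_biprod hsum hsummand m' gX hgX)
    exact hno ⟨Es j, hmem, hnz, s, r, hsr, hsp⟩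
end

section
/- Let X be a full, additively closed, extension-closed subcategory of an abelian category A, and let 0 → X → E → Y → 0 be a minimal universal extension of Y to X. Then Ext¹(E, X') = 0 for all X' ∈ X, i.e. E lies in the left Ext-orthogonal ^{⊥_E}X. -/
open CategoryTheory Limits ZeroObject

attribute [local instance] CategoryTheory.Limits.HasFiniteBiproducts.of_hasFiniteProducts

universe w v u

variable {A : Type u} [Category.{v} A] [Abelian A]

section WakamatsuAux

attribute [local instance] CategoryTheory.Abelian.Pseudoelement.objectToSort
  CategoryTheory.Abelian.Pseudoelement.homToFun

open CategoryTheory.Abelian.Pseudoelement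

lemma mem_biproduct_of_mem {𝒳 : Set A}
    (hsum : ∀ {X Y : A}, X ∈ 𝒳 → Y ∈ 𝒳 → (X ⊞ Y) ∈ 𝒳)
    (hsummand : ∀ {X Y : A} (s : X ⟶ Y) (r : Y ⟶ X), s ≫ r = 𝟙 X → Y ∈ 𝒳 → X ∈ 𝒳)
    (hne : ∃ W, W ∈ 𝒳) :
    ∀ (n : ℕ) (g : Fin n → A), (∀ j, g j ∈ 𝒳) → (⨁ g) ∈ 𝒳 := by
  intro n
  induction n with
  | zero =>
    intro g _
    obtain ⟨W, hW⟩ := hne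
    refine hsummand (0 : (⨁ g) ⟶ W) 0 ?_ hW
    apply biproduct.hom_ext
    exact fun j => j.elim0
  | succ n ih =>
    intro g hg
    have h1 : (g 0 ⊞ ⨁ (fun j : Fin n => g j.succ)) ∈ 𝒳 :=
      hsum (hg 0) (ih _ (fun j => hg _))
    refine hsummand
      (biprod.lift (biproduct.π g 0) (biproduct.lift fun j : Fin n => biproduct.π g j.succ))
      (biprod.desc (biproduct.ι g 0) (biproduct.desc fun j : Fin n => biproduct.ι g j.succ))
      ?_ h1
    rw [biprod.lift_desc, biproduct.lift_desc, ← biproduct.total, Fin.sum_univ_succ]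

/-- Wakamatsu-type lemma: if `𝒳` is additively closed and extension-closed and
`0 → X → E → Y → 0` is a minimal universal extension of `Y` to `𝒳`, then
`Ext¹(E, X') = 0` for every `X' ∈ 𝒳`, i.e. `E ∈ ^{⊥_E}𝒳`. -/
theorem stmt5 {𝒳 : Set A}
    (hsum : ∀ {X Y : A}, X ∈ 𝒳 → Y ∈ 𝒳 → (X ⊞ Y) ∈ 𝒳)
    (hsummand : ∀ {X Y : A} (s : X ⟶ Y) (r : Y ⟶ X), s ≫ r = 𝟙 X → Y ∈ 𝒳 → X ∈ 𝒳)
    (hext : ∀ {X E Y : A} (i : X ⟶ E) (p : E ⟶ Y),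
      IsShortExactSeq i p → X ∈ 𝒳 → Y ∈ 𝒳 → E ∈ 𝒳)
    {X E Y : A} {i : X ⟶ E} {p : E ⟶ Y}
    (hu : IsUniversalExtension 𝒳 i p) (hm : RightMinimal p) :
    ∀ X' ∈ 𝒳, Ext1Vanishes E X' := by
  obtain ⟨hXadd, ⟨w, hse⟩, huniv⟩ := hu
  intro X' hX' U f g hfg
  obtain ⟨w', hse'⟩ := hfg
  have hmi : Mono i := hse.mono_f
  have hep : Epi p := hse.epi_g
  have hmf : Mono f := hse'.mono_f
  have heg : Epi g := hse'.epi_g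
  have hX : X ∈ 𝒳 := by
    obtain ⟨n, gg, s, r, hmem, hsr⟩ := hXadd
    exact hsummand s r hsr (mem_biproduct_of_mem hsum hsummand ⟨X', hX'⟩ n gg hmem)
  let q : U ⟶ Y := g ≫ p
  have hq : q = g ≫ p := rfl
  have hqe : Epi q := epi_comp g p
  let ι : kernel q ⟶ U := kernel.ι q
  have hfq : f ≫ q = 0 := by rw [hq, ← Category.assoc, w', zero_comp]
  let f' : X' ⟶ kernel q := kernel.lift q f hfq
  have hf'ι : f' ≫ ι = f := kernel.lift_ι q f hfq
  have hmf' : Mono f' := mono_of_mono_fac hf'ι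
  have hιg : (ι ≫ g) ≫ p = 0 := by rw [Category.assoc, ← hq]; exact kernel.condition q
  obtain ⟨t, ht⟩ := KernelFork.IsLimit.lift' hse.fIsKernel (ι ≫ g) hιg
  have ht : t ≫ i = ι ≫ g := ht
  -- exactness of 0 → K → U → Y → 0
  have hexK : (ShortComplex.mk ι q (kernel.condition q)).Exact :=
    ShortComplex.exact_of_f_is_kernel _ (kernelIsKernel q)
  have hSK : IsShortExactSeq ι q :=
    ⟨kernel.condition q, { exact := hexK, mono_f := inferInstance, epi_g := hqe }⟩
  -- t is epi, by a pseudoelement chase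
  have hte : Epi t := by
    apply epi_of_pseudo_surjective
    intro x
    obtain ⟨u, hu'⟩ := pseudo_surjective_of_epi g (i x)
    have hqu : q u = 0 := by
      rw [hq, Abelian.Pseudoelement.comp_apply, hu', ← Abelian.Pseudoelement.comp_apply, w, Abelian.Pseudoelement.zero_apply]
    obtain ⟨k, hk⟩ := pseudo_exact_of_exact hexK u hqu
    refine ⟨k, pseudo_injective_of_mono i ?_⟩
    rw [← Abelian.Pseudoelement.comp_apply, ht, Abelian.Pseudoelement.comp_apply, hk, hu']
  have wft : f' ≫ t = 0 := by
    rw [← cancel_mono i, Category.assoc, ht, ← Category.assoc, hf'ι, w', zero_comp]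
  -- exactness of 0 → X' → K → X → 0, by a pseudoelement chase
  have hexact2 : (ShortComplex.mk f' t wft).Exact := by
    apply exact_of_pseudo_exact
    intro b hb
    have hgb : g (ι b) = 0 := by
      rw [← Abelian.Pseudoelement.comp_apply, ← ht, Abelian.Pseudoelement.comp_apply, hb, apply_zero]
    obtain ⟨a, ha⟩ := pseudo_exact_of_exact hse'.exact (ι b) hgb
    refine ⟨a, pseudo_injective_of_mono ι ?_⟩
    rw [← Abelian.Pseudoelement.comp_apply, hf'ι, ha]
  have hSK2 : IsShortExactSeq f' t :=
    ⟨wft, { exact := hexact2, mono_f := hmf', epi_g := hte }⟩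
  have hK : kernel q ∈ 𝒳 := hext f' t hSK2 hX' hX
  obtain ⟨φ, ψ, hcomm, hψ⟩ := huniv ι q hK hSK
  have hiso : (ψ ≫ g) ≫ p = p := by rw [Category.assoc, ← hq, hψ]
  have := hm (ψ ≫ g) hiso
  let s : E ⟶ U := inv (ψ ≫ g) ≫ ψ
  have hsg : s ≫ g = 𝟙 E := by
    show (inv (ψ ≫ g) ≫ ψ) ≫ g = 𝟙 E
    rw [Category.assoc, IsIso.inv_hom_id]
  have sp := ShortComplex.Splitting.ofExactOfSection (ShortComplex.mk f g w')
    hse'.exact s hsg hmf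
  exact ⟨sp.r, sp.f_r⟩

end WakamatsuAux
end

section
/- Let X be a full, additively closed, extension-closed subcategory of an abelian category A, and 0 → X → E →^g Y → 0 a minimal universal extension of Y to X. Then g : E → Y is a right ^{⊥_E}X-approximation of Y: every morphism Z → Y with Ext¹(Z, X') = 0 for all X' ∈ X factors through g. -/
open CategoryTheory Limits ZeroObject

attribute [local instance] CategoryTheory.Limits.HasFiniteBiproducts.of_hasFiniteProducts

universe w v u

variable {A : Type u} [Category.{v} A] [Abelian A]

section WakamatsuAux

variable {A : Type u} [Category.{v} A] [Abelian A]

lemma isShortExactSeq_of {X E Y : A} {i : X ⟶ E} {p : E ⟶ Y} (w : i ≫ p = 0)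
    (h1 : Mono i) (h2 : Epi p) (h3 : (ShortComplex.mk i p w).Exact) : IsShortExactSeq i p :=
  ⟨w, { exact := h3, mono_f := h1, epi_g := h2 }⟩

/-- The pushout of a short exact sequence along a morphism out of its first term
is again a short exact sequence. -/
lemma aux_pushout_ses {W U Z M : A} {i : W ⟶ U} {p : U ⟶ Z} (w : i ≫ p = 0)
    (h : (ShortComplex.mk i p w).ShortExact) (s : W ⟶ M) :
    IsShortExactSeq (pushout.inl s i)
      (pushout.desc (0 : M ⟶ Z) p (by rw [comp_zero, w])) := by
  haveI : Mono i := h.mono_f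
  haveI : Epi p := h.epi_g
  have pf : s ≫ (0 : M ⟶ Z) = i ≫ p := by rw [comp_zero, w]
  have hinr : pushout.inr s i ≫ pushout.desc (0 : M ⟶ Z) p pf = p :=
    pushout.inr_desc _ _ _
  refine isShortExactSeq_of (pushout.inl_desc _ _ _) inferInstance (epi_of_epi_fac hinr) ?_
  apply ShortComplex.exact_of_g_is_cokernel
  refine CokernelCofork.IsColimit.ofπ _ _
    (fun {T} t ht => h.exact.desc (pushout.inr s i ≫ t) ?_) ?_ ?_
  · rw [← Category.assoc, ← pushout.condition, Category.assoc, ht, comp_zero]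
  · intro T t ht
    apply pushout.hom_ext
    · erw [← Category.assoc, pushout.inl_desc, zero_comp]
      exact ht.symm
    · erw [← Category.assoc, pushout.inr_desc, h.exact.g_desc]
  · intro T t ht m hm
    have h1 : p ≫ m = pushout.inr s i ≫ t := by
      rw [← hinr, Category.assoc, hm]
    rw [← cancel_epi p, h.exact.g_desc, h1]

/-- The pullback of a short exact sequence along a morphism into its last term
is again a short exact sequence. -/
lemma aux_pullback_ses {X E Y Z : A} {i : X ⟶ E} {g : E ⟶ Y} (w : i ≫ g = 0)
    (h : (ShortComplex.mk i g w).ShortExact) (f : Z ⟶ Y) :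
    IsShortExactSeq (pullback.lift i (0 : X ⟶ Z) (by rw [zero_comp, w]))
      (pullback.snd g f) := by
  haveI : Mono i := h.mono_f
  haveI : Epi g := h.epi_g
  have pf : i ≫ g = (0 : X ⟶ Z) ≫ f := by rw [zero_comp, w]
  have hfst : pullback.lift i (0 : X ⟶ Z) pf ≫ pullback.fst g f = i :=
    pullback.lift_fst _ _ _
  refine isShortExactSeq_of (pullback.lift_snd _ _ _) (mono_of_mono_fac hfst) inferInstance ?_
  apply ShortComplex.exact_of_f_is_kernel
  refine KernelFork.IsLimit.ofι _ _
    (fun {T} t ht => h.exact.lift (t ≫ pullback.fst g f) ?_) ?_ ?_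
  · rw [Category.assoc, pullback.condition, ← Category.assoc, ht, zero_comp]
  · intro T t ht
    apply pullback.hom_ext
    · erw [Category.assoc, pullback.lift_fst, h.exact.lift_f]
    · erw [Category.assoc, pullback.lift_snd, comp_zero]
      exact ht.symm
  · intro T t ht m hm
    have h1 : m ≫ i = t ≫ pullback.fst g f := by
      rw [← hm, Category.assoc, hfst]
    rw [← cancel_mono i, h.exact.lift_f, h1]

/-- `Ext¹(Z, −)` vanishing passes to finite biproducts. -/
lemma aux_vanish_biprod {Z : A} {n : ℕ} (g : Fin n → A)
    (hv : ∀ j, Ext1Vanishes Z (g j)) : Ext1Vanishes Z (⨁ g) := by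
  rintro U i p ⟨w, hse⟩
  have key : ∀ j, ∃ rj : pushout (biproduct.π g j) i ⟶ g j,
      pushout.inl (biproduct.π g j) i ≫ rj = 𝟙 (g j) :=
    fun j => hv j _ _ (aux_pushout_ses w hse (biproduct.π g j))
  choose r hr using key
  refine ⟨biproduct.lift (fun j => pushout.inr (biproduct.π g j) i ≫ r j), ?_⟩
  ext j
  simp only [Category.assoc, biproduct.lift_π, Category.id_comp]
  rw [← pushout.condition_assoc, hr j, Category.comp_id]

/-- `Ext¹(Z, −)` vanishing passes to direct summands. -/
lemma aux_vanish_summand {Z X M : A} (s : X ⟶ M) (t : M ⟶ X) (hst : s ≫ t = 𝟙 X)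
    (hv : Ext1Vanishes Z M) : Ext1Vanishes Z X := by
  rintro U i p ⟨w, hse⟩
  obtain ⟨r, hr⟩ := hv _ _ (aux_pushout_ses w hse s)
  refine ⟨pushout.inr s i ≫ r ≫ t, ?_⟩
  rw [← pushout.condition_assoc, reassoc_of% hr, hst]

/-- `Ext¹(Z, −)` vanishing on `𝒳` extends to `add 𝒳`. -/
lemma aux_vanish_add {Z M : A} {𝒳 : Set A} (hv : ∀ X' ∈ 𝒳, Ext1Vanishes Z X')
    (hM : InAdd 𝒳 M) : Ext1Vanishes Z M := by
  obtain ⟨n, g, s, r, hg, hsr⟩ := hM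
  exact aux_vanish_summand s r hsr (aux_vanish_biprod g (fun j => hv _ (hg j)))

end WakamatsuAux

/-- Wakamatsu-type lemma, second part: the epimorphism `g : E ⟶ Y` of a minimal
universal extension of `Y` to `𝒳` is a right `^{⊥_E}𝒳`-approximation of `Y`. -/
theorem stmt6 {𝒳 : Set A}
    (hsum : ∀ {X Y : A}, X ∈ 𝒳 → Y ∈ 𝒳 → (X ⊞ Y) ∈ 𝒳)
    (hsummand : ∀ {X Y : A} (s : X ⟶ Y) (r : Y ⟶ X), s ≫ r = 𝟙 X → Y ∈ 𝒳 → X ∈ 𝒳)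
    (hext : ∀ {X E Y : A} (i : X ⟶ E) (p : E ⟶ Y),
      IsShortExactSeq i p → X ∈ 𝒳 → Y ∈ 𝒳 → E ∈ 𝒳)
    {X E Y : A} {i : X ⟶ E} {g : E ⟶ Y}
    (hu : IsUniversalExtension 𝒳 i g) (hm : RightMinimal g) :
    ∀ (Z : A), (∀ X' ∈ 𝒳, Ext1Vanishes Z X') → ∀ f : Z ⟶ Y, ∃ h : Z ⟶ E, h ≫ g = f := by
  obtain ⟨hadd, ⟨w, hse⟩, -⟩ := hu
  intro Z hZ f
  haveI : Epi g := hse.epi_g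
  have hpb := aux_pullback_ses w hse f
  obtain ⟨wp, hsep⟩ := hpb
  obtain ⟨r, hr⟩ := aux_vanish_add hZ hadd _ _ (⟨wp, hsep⟩ : IsShortExactSeq _ _)
  haveI := hsep.epi_g
  let sp := ShortComplex.Splitting.ofExactOfRetraction _ hsep.exact r hr hsep.epi_g
  refine ⟨sp.s ≫ pullback.fst g f, ?_⟩
  have hs := sp.s_g
  rw [Category.assoc, pullback.condition, ← Category.assoc]
  change (sp.s ≫ pullback.snd g f) ≫ f = f
  rw [hs, Category.id_comp]
end

section
/- Let (T, F) be a torsion pair in an abelian category A, and X ∈ ^{⊥_E}T (i.e. Ext¹(X, T) = 0 for all T ∈ T). Then the torsion-free part fX of X admits a universal extension to T; in fact the torsion sequence 0 → tX → X → fX → 0 is such a universal extension. -/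
open CategoryTheory Limits ZeroObject

attribute [local instance] CategoryTheory.Limits.HasFiniteBiproducts.of_hasFiniteProducts

universe w v u

variable {A : Type u} [Category.{v} A] [Abelian A]

/-- If `X ∈ ^{⊥_E}𝒯` then the torsion sequence `0 → tX → X → fX → 0` is a universal
extension from the torsion-free part `fX` to `𝒯`; in particular `fX` admits a universal
extension to `𝒯`. -/
theorem stmt7 (P : TorsionPair A) {tX X fX : A}
    (i : tX ⟶ X) (p : X ⟶ fX) (ht : tX ∈ P.tors) (hf : fX ∈ P.free)
    (hse : IsShortExactSeq i p)
    (hperp : ∀ T ∈ P.tors, Ext1Vanishes X T) :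
    IsUniversalExtension P.tors i p ∧ AdmitsUniversalExtension P.tors fX := by

  obtain ⟨w, hSE⟩ := hse
  have hInAdd : InAdd P.tors tX := by
    refine ⟨1, fun _ => tX, biproduct.ι (fun _ : Fin 1 => tX) 0,
      biproduct.π (fun _ : Fin 1 => tX) 0, fun _ => ht, ?_⟩
    simp
  have main : ∀ ⦃X' U : A⦄ (i' : X' ⟶ U) (p' : U ⟶ fX), X' ∈ P.tors →
      IsShortExactSeq i' p' →
      ∃ (φ : tX ⟶ X') (ψ : X ⟶ U), i ≫ ψ = φ ≫ i' ∧ ψ ≫ p' = p := by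
    intro X' U i' p' hX' ⟨w', hSE'⟩
    haveI : Epi p' := hSE'.epi_g
    haveI : Mono i' := hSE'.mono_f
    -- pullback of p along p'
    let V := pullback p p'
    let fst : V ⟶ X := pullback.fst p p'
    let snd : V ⟶ U := pullback.snd p p'
    have hcomm : fst ≫ p = snd ≫ p' := pullback.condition
    haveI : Epi fst := by
      have : Epi (pullback.fst p p') := inferInstance
      exact this
    let j : X' ⟶ V := pullback.lift 0 i' (by simp [w'])
    have hjf : j ≫ fst = 0 := pullback.lift_fst _ _ _
    have hjs : j ≫ snd = i' := pullback.lift_snd _ _ _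
    haveI : Mono j := by
      have : Mono (j ≫ snd) := by rw [hjs]; infer_instance
      exact mono_of_mono j snd
    -- j is the kernel of fst
    have hker : IsLimit (KernelFork.ofι j hjf) := by
      refine KernelFork.IsLimit.ofι j hjf (fun {W} k hk =>
        (KernelFork.IsLimit.lift' hSE'.fIsKernel (k ≫ snd)
          (by rw [Category.assoc, ← hcomm, ← Category.assoc, hk, zero_comp])).1)
        (fun {W} k hk => ?_) (fun {W} k hk m hm => ?_)
      · apply pullback.hom_ext
        · simp [fst, hjf, hk]
        · have := (KernelFork.IsLimit.lift' hSE'.fIsKernel (k ≫ snd)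
            (by rw [Category.assoc, ← hcomm, ← Category.assoc, hk, zero_comp])).2
          have hjs' : j ≫ pullback.snd p p' = i' := hjs
          simpa [hjs'] using this
      · have h1 : (m ≫ j) ≫ snd = k ≫ snd := by rw [hm]
        rw [Category.assoc, hjs] at h1
        have h2 := (KernelFork.IsLimit.lift' hSE'.fIsKernel (k ≫ snd)
          (by rw [Category.assoc, ← hcomm, ← Category.assoc, hk, zero_comp])).2
        simp only [Fork.ι_ofι] at h2; dsimp at h2
        dsimp only
        rw [← cancel_mono i', h1, h2]
    have hVse : (ShortComplex.mk j fst hjf).ShortExact :=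
      { exact := ShortComplex.exact_of_f_is_kernel _ hker
        mono_f := inferInstance
        epi_g := inferInstance }
    obtain ⟨r, hr⟩ := hperp X' hX' j fst ⟨hjf, hVse⟩
    -- build the section of fst
    let e : V ⟶ V := 𝟙 V - r ≫ j
    have hje : j ≫ e = 0 := by
      simp only [e, Preadditive.comp_sub, Category.comp_id, ← Category.assoc, hr,
        Category.id_comp, sub_self]
    obtain ⟨s, hs⟩ := CokernelCofork.IsColimit.desc' hVse.gIsCokernel e hje
    simp only [Cofork.π_ofπ] at hs
    have hsf : s ≫ fst = 𝟙 X := by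
      rw [← cancel_epi fst, ← Category.assoc, hs]
      simp only [e, Preadditive.sub_comp, Category.id_comp, Category.assoc, hjf,
        comp_zero, sub_zero, Category.comp_id]
    let ψ : X ⟶ U := s ≫ snd
    have hψp : ψ ≫ p' = p := by
      rw [Category.assoc, ← hcomm, ← Category.assoc, hsf, Category.id_comp]
    have hiψ : (i ≫ ψ) ≫ p' = 0 := by rw [Category.assoc, hψp, w]
    obtain ⟨φ, hφ⟩ := KernelFork.IsLimit.lift' hSE'.fIsKernel (i ≫ ψ) hiψ
    exact ⟨φ, ψ, hφ.symm, hψp⟩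
  have hue : IsUniversalExtension P.tors i p := ⟨hInAdd, ⟨w, hSE⟩, main⟩
  exact ⟨hue, tX, X, i, p, hue⟩
end

section
/- Let (T, F) be a torsion pair in a Krull–Schmidt abelian category A, and let F → F' be a morphism between objects of F each admitting a (fixed) minimal universal extension to T, with middle terms E and E'. Then there exists a morphism E → E' making the diagram of the two universal extensions commute, and its class modulo morphisms factoring through T is uniquely determined. This yields a functor c : E → ^{⊥_E}T/[T], where E is the subcategory of torsion-free objects admitting a universal extension to T. -/
open CategoryTheory Limits ZeroObject

attribute [local instance] CategoryTheory.Limits.HasFiniteBiproducts.of_hasFiniteProducts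

universe w v u

variable {A : Type u} [Category.{v} A] [Abelian A]

/-- Given a morphism `f : F ⟶ F'` between torsion-free objects with fixed minimal
universal extensions to `𝒯`, there is a compatible morphism between the middle terms,
unique up to morphisms factoring through `𝒯`; this is the assignment underlying the
functor `c : ℰ ⥤ ^{⊥_E}𝒯/[𝒯]`. -/
theorem stmt9 (hKS : KrullSchmidt A) (P : TorsionPair A)
    {F F' T T' E E' : A} (f : F ⟶ F')
    (hF : F ∈ P.free) (hF' : F' ∈ P.free)
    {i : T ⟶ E} {p : E ⟶ F} {i' : T' ⟶ E'} {p' : E' ⟶ F'}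
    (hT : T ∈ P.tors) (hT' : T' ∈ P.tors)
    (hu : IsUniversalExtension P.tors i p) (hm : RightMinimal p)
    (hu' : IsUniversalExtension P.tors i' p') (hm' : RightMinimal p') :
    (∃ (φ : T ⟶ T') (ψ : E ⟶ E'), i ≫ ψ = φ ≫ i' ∧ ψ ≫ p' = p ≫ f) ∧
    ∀ ψ₁ ψ₂ : E ⟶ E', ψ₁ ≫ p' = p ≫ f → ψ₂ ≫ p' = p ≫ f →
      ∃ (T₀ : A) (a : E ⟶ T₀) (b : T₀ ⟶ E'), T₀ ∈ P.tors ∧ ψ₁ - ψ₂ = a ≫ b := by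
  obtain ⟨w', hse'⟩ := hu'.2.1
  haveI : Mono i' := hse'.mono_f
  haveI : Epi p' := hse'.epi_g
  have hex' := hse'.exact
  constructor
  · -- existence via pullback of the second extension along f
    let i'' : T' ⟶ pullback p' f := pullback.lift i' 0 (by simp [w'])
    have hi''fst : i'' ≫ pullback.fst p' f = i' := pullback.lift_fst _ _ _
    have hi''snd : i'' ≫ pullback.snd p' f = 0 := pullback.lift_snd _ _ _
    haveI : Mono i'' := mono_of_mono_fac hi''fst
    -- i'' is a kernel of pullback.snd
    have hker : IsLimit (KernelFork.ofι i'' hi''snd) := by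
      refine KernelFork.IsLimit.ofι _ _
        (fun {W} t ht => hex'.lift (t ≫ pullback.fst p' f)
          (by rw [Category.assoc, pullback.condition, ← Category.assoc, ht, zero_comp]))
        (fun {W} t ht => ?_) (fun {W} t ht m hm => ?_)
      · apply pullback.hom_ext
        · rw [Category.assoc, hi''fst]
          exact hex'.lift_f _ _
        · rw [Category.assoc, hi''snd, comp_zero, ht]
      · rw [← cancel_mono i'', hm]
        apply pullback.hom_ext
        · rw [Category.assoc, hi''fst]
          exact (hex'.lift_f _ _).symm
        · rw [Category.assoc, hi''snd, comp_zero, ht]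
    have hse'' : IsShortExactSeq i'' (pullback.snd p' f) :=
      ⟨hi''snd, { exact := ShortComplex.exact_of_f_is_kernel _ hker }⟩
    obtain ⟨φ, ψ₀, h1, h2⟩ := hu.2.2 i'' (pullback.snd p' f) hT' hse''
    refine ⟨φ, ψ₀ ≫ pullback.fst p' f, ?_, ?_⟩
    · rw [← Category.assoc, h1, Category.assoc, hi''fst]
    · rw [Category.assoc, pullback.condition, ← Category.assoc, h2]
  · -- uniqueness modulo [𝒯]
    intro ψ₁ ψ₂ h₁ h₂
    have hz : (ψ₁ - ψ₂) ≫ p' = 0 := by rw [Preadditive.sub_comp, h₁, h₂, sub_self]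
    exact ⟨T', hex'.lift (ψ₁ - ψ₂) hz, i', hT', (hex'.lift_f _ _).symm⟩
end

section
/- Let A be a Krull–Schmidt abelian category with enough projectives and (T, F) a torsion pair with T covariantly finite. Then the pair (^{⊥_E}T, T) is a left-weak cotorsion pair: (1) Ext¹(C, T) = 0 for all C ∈ ^{⊥_E}T, T ∈ T; (2a) every A ∈ A admits a short exact sequence 0 → T → E →^f A → 0 with T ∈ T and f a right ^{⊥_E}T-approximation; (2b) every A ∈ A admits an exact sequence A →^g T' → X → 0 with g a left T-approximation and X ∈ ^{⊥_E}T. -/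
open CategoryTheory Limits ZeroObject

attribute [local instance] CategoryTheory.Limits.HasFiniteBiproducts.of_hasFiniteProducts

universe w v u

variable {A : Type u} [Category.{v} A] [Abelian A]

def LeftMinimal {M X : A} (g : M ⟶ X) : Prop :=
  ∀ u : X ⟶ X, g ≫ u = g → IsIso u

namespace WCP

lemma isIso_of_isUnit {G : A} {c : G ⟶ G} (h : IsUnit (M := End G) c) : IsIso c :=
  (CategoryTheory.isUnit_iff_isIso (X := G) c).1 h

lemma isUnit_of_isIso {G : A} (c : G ⟶ G) (h : IsIso c) : IsUnit (M := End G) c :=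
  (CategoryTheory.isUnit_iff_isIso (X := G) c).2 h

lemma local_ring_add (R : Type*) [Ring R] [IsLocalRing R] {a b : R} (h : IsUnit (a + b)) :
    IsUnit a ∨ IsUnit b := by
  obtain ⟨u, hu⟩ := h
  have h1 : a * ↑u⁻¹ + b * ↑u⁻¹ = 1 := by rw [← add_mul, ← hu, Units.mul_inv]
  rcases IsLocalRing.isUnit_or_isUnit_of_add_one h1 with h' | h'
  · left
    have := h'.mul u.isUnit
    rwa [mul_assoc, Units.inv_mul, mul_one] at this
  · right
    have := h'.mul u.isUnit
    rwa [mul_assoc, Units.inv_mul, mul_one] at this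

lemma nonunit_add {G : A} (hG : IsLocalRing (End G)) {x y : G ⟶ G}
    (hx : ¬ IsUnit (M := End G) x) (hy : ¬ IsUnit (M := End G) y) :
    ¬ IsUnit (M := End G) (x + y) := by
  haveI := hG
  intro h
  refine (local_ring_add (End G) (a := x) (b := y) ?_).elim hx hy
  exact h

lemma isIso_one_sub_of_nonunit {G : A} (hG : IsLocalRing (End G)) {x : G ⟶ G}
    (hx : ¬ IsUnit (M := End G) x) : IsIso (𝟙 G - x) := by
  haveI := hG
  apply isIso_of_isUnit
  have h1 : IsUnit (M := End G) (𝟙 G - x + x) := by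
    have e : (𝟙 G - x + x : G ⟶ G) = 𝟙 G := by simp
    rw [e]
    exact isUnit_one
  refine (local_ring_add (End G) (a := 𝟙 G - x) (b := x) ?_).elim id fun h => absurd h hx
  exact h1

lemma isIso_id_add {X : A} (h : X ⟶ X) (hh : h ≫ h = 0) : IsIso (𝟙 X + h) := by
  refine ⟨𝟙 X - h, ?_, ?_⟩ <;>
    simp [Preadditive.comp_sub, Preadditive.sub_comp, Preadditive.add_comp,
      Preadditive.comp_add, hh]

lemma isIso_ofComponents {X₁ X₂ Y₁ Y₂ : A} (f₁₁ : X₁ ⟶ Y₁) (f₁₂ : X₁ ⟶ Y₂) (f₂₁ : X₂ ⟶ Y₁)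
    (f₂₂ : X₂ ⟶ Y₂) [IsIso f₁₁] (h : IsIso (f₂₂ - f₂₁ ≫ inv f₁₁ ≫ f₁₂)) :
    IsIso (Biprod.ofComponents f₁₁ f₁₂ f₂₁ f₂₂) := by
  have w : (Biprod.unipotentLower (-f₂₁ ≫ inv f₁₁)).hom ≫ Biprod.ofComponents f₁₁ f₁₂ f₂₁ f₂₂ ≫
      (Biprod.unipotentUpper (-(inv f₁₁) ≫ f₁₂)).hom =
      biprod.map f₁₁ (f₂₂ - f₂₁ ≫ inv f₁₁ ≫ f₁₂) := by
    ext <;> simp <;> abel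
  have hmap : IsIso (biprod.map f₁₁ (f₂₂ - f₂₁ ≫ inv f₁₁ ≫ f₁₂)) := by
    have : biprod.map f₁₁ (f₂₂ - f₂₁ ≫ inv f₁₁ ≫ f₁₂) =
        (biprod.mapIso (asIso f₁₁) (asIso (f₂₂ - f₂₁ ≫ inv f₁₁ ≫ f₁₂))).hom := by
      rfl
    rw [this]
    infer_instance
  have : Biprod.ofComponents f₁₁ f₁₂ f₂₁ f₂₂ =
      (Biprod.unipotentLower (-f₂₁ ≫ inv f₁₁)).inv ≫
        biprod.map f₁₁ (f₂₂ - f₂₁ ≫ inv f₁₁ ≫ f₁₂) ≫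
        (Biprod.unipotentUpper (-(inv f₁₁) ≫ f₁₂)).inv := by
    rw [← w]
    simp
  rw [this]
  infer_instance

lemma isIso_of_entries {X₁ X₂ : A} (f : X₁ ⊞ X₂ ⟶ X₁ ⊞ X₂)
    (h₁ : IsIso (biprod.inl ≫ f ≫ biprod.fst))
    (h₂ : IsIso ((biprod.inr ≫ f ≫ biprod.snd) -
      (biprod.inr ≫ f ≫ biprod.fst) ≫ inv (biprod.inl ≫ f ≫ biprod.fst) ≫
        (biprod.inl ≫ f ≫ biprod.snd))) : IsIso f := by
  rw [← Biprod.ofComponents_eq f]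
  exact isIso_ofComponents _ _ _ _ h₂

def Rad (X : A) (h : X ⟶ X) : Prop :=
  ∀ (G : A), IsLocalRing (End G) → ∀ (a : X ⟶ G) (b : G ⟶ X),
    ¬ IsUnit (M := End G) (b ≫ h ≫ a)

def LocalSum : ℕ → A → Prop
  | 0, X => IsZero X
  | (n+1), X => ∃ (G Y : A), IsLocalRing (End G) ∧ LocalSum n Y ∧ Nonempty (X ≅ G ⊞ Y)

lemma rad_of_iso {X X' : A} (e : X' ≅ X) {h : X ⟶ X} (hh : Rad X h) :
    Rad X' (e.hom ≫ h ≫ e.inv) := by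
  intro G hG a b
  have := hh G hG (e.inv ≫ a) (b ≫ e.hom)
  simpa [Category.assoc] using this

lemma isIso_one_sub_of_rad : ∀ (n : ℕ) (X : A), LocalSum n X → ∀ (h : X ⟶ X), Rad X h →
    IsIso (𝟙 X - h) := by
  intro n
  induction n with
  | zero =>
    intro X hX h _
    have : (𝟙 X - h) = 𝟙 X := hX.eq_of_src _ _
    rw [this]; infer_instance
  | succ m ih =>
    intro X hX h hrad
    obtain ⟨G, Y, hG, hY, ⟨e⟩⟩ := hX
    set h' : G ⊞ Y ⟶ G ⊞ Y := e.inv ≫ h ≫ e.hom with hh'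
    have hrad' : Rad (G ⊞ Y) h' := rad_of_iso e.symm hrad
    suffices hiso : IsIso (𝟙 (G ⊞ Y) - h') by
      have : 𝟙 X - h = e.hom ≫ (𝟙 (G ⊞ Y) - h') ≫ e.inv := by
        simp [hh', Preadditive.comp_sub, Preadditive.sub_comp]
      rw [this]; infer_instance
    have e11 : biprod.inl ≫ (𝟙 (G ⊞ Y) - h') ≫ biprod.fst
        = 𝟙 G - biprod.inl ≫ h' ≫ biprod.fst := by
      simp [Preadditive.comp_sub, Preadditive.sub_comp]
    have hM11 : IsIso (biprod.inl ≫ (𝟙 (G ⊞ Y) - h') ≫ biprod.fst) := by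
      rw [e11]
      exact isIso_one_sub_of_nonunit hG (hrad' G hG biprod.fst biprod.inl)
    apply isIso_of_entries _ hM11
    -- identify the Schur complement with 𝟙 Y - h̃
    set t : G ⟶ G := biprod.inl ≫ (𝟙 (G ⊞ Y) - h') ≫ biprod.fst with ht
    set htil : Y ⟶ Y := (biprod.inr ≫ h' ≫ biprod.snd) +
      (biprod.inr ≫ h' ≫ biprod.fst) ≫ inv t ≫ (biprod.inl ≫ h' ≫ biprod.snd) with hhtil
    have hsch : (biprod.inr ≫ (𝟙 (G ⊞ Y) - h') ≫ biprod.snd) -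
        (biprod.inr ≫ (𝟙 (G ⊞ Y) - h') ≫ biprod.fst) ≫ inv t ≫
          (biprod.inl ≫ (𝟙 (G ⊞ Y) - h') ≫ biprod.snd) = 𝟙 Y - htil := by
      have e22 : biprod.inr ≫ (𝟙 (G ⊞ Y) - h') ≫ biprod.snd
          = 𝟙 Y - biprod.inr ≫ h' ≫ biprod.snd := by
        simp [Preadditive.comp_sub, Preadditive.sub_comp]
      have e21 : biprod.inr ≫ (𝟙 (G ⊞ Y) - h') ≫ biprod.fst
          = -(biprod.inr ≫ h' ≫ biprod.fst) := by
        simp [Preadditive.comp_sub, Preadditive.sub_comp]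
      have e12 : biprod.inl ≫ (𝟙 (G ⊞ Y) - h') ≫ biprod.snd
          = -(biprod.inl ≫ h' ≫ biprod.snd) := by
        simp [Preadditive.comp_sub, Preadditive.sub_comp]
      rw [e22, e21, e12, hhtil]
      simp only [Preadditive.neg_comp, Preadditive.comp_neg, neg_neg]
      abel
    rw [hsch]
    -- htil is in the radical of Y
    have hradY : Rad Y htil := by
      intro G' hG' a b
      have key : b ≫ htil ≫ a = (b ≫ biprod.inr) ≫ h' ≫ (biprod.snd ≫ a) +
          (b ≫ biprod.inr) ≫ h' ≫ (biprod.fst ≫ inv t ≫ biprod.inl ≫ h' ≫ biprod.snd ≫ a) := by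
        rw [hhtil]
        simp only [Preadditive.add_comp, Preadditive.comp_add, Category.assoc]
      rw [key]
      exact nonunit_add hG' (hrad' G' hG' _ _) (hrad' G' hG' _ _)
    exact ih Y hY htil hradY

lemma into_biprod {Z X₁ X₂ : A} (z : Z ⟶ X₁ ⊞ X₂) :
    z = (z ≫ biprod.fst) ≫ biprod.inl + (z ≫ biprod.snd) ≫ biprod.inr := by
  calc z = z ≫ 𝟙 _ := by simp
    _ = z ≫ (biprod.fst ≫ biprod.inl + biprod.snd ≫ biprod.inr) := by rw [biprod.total]
    _ = (z ≫ biprod.fst) ≫ biprod.inl + (z ≫ biprod.snd) ≫ biprod.inr := by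
        rw [Preadditive.comp_add, ← Category.assoc, ← Category.assoc]

lemma isIso_map_left {X₁ Y₁ X₂ : A} (b : X₁ ⟶ Y₁) (hb : IsIso b) :
    IsIso (biprod.map b (𝟙 X₂)) := by
  haveI := hb
  have : biprod.map b (𝟙 X₂) = (biprod.mapIso (asIso b) (Iso.refl X₂)).hom := rfl
  rw [this]
  infer_instance

lemma case_A {X G G₁ Y₁ : A} (hG : IsLocalRing (End G)) (hG₁ : IsLocalRing (End G₁))
    (e : X ≅ G₁ ⊞ Y₁) (β : G ⟶ X) (ρ : X ⟶ G) (hβρ : β ≫ ρ = 𝟙 G)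
    (hu : IsUnit (M := End G) ((β ≫ e.hom ≫ biprod.fst) ≫ (biprod.inl ≫ e.inv ≫ ρ))) :
    ∃ (ψ : G ⊞ Y₁ ≅ X), biprod.inl ≫ ψ.hom = β := by
  haveI := hG
  haveI := hG₁
  set β₁ : G ⟶ G₁ := β ≫ e.hom ≫ biprod.fst with hβ₁
  set β₂ : G ⟶ Y₁ := β ≫ e.hom ≫ biprod.snd with hβ₂
  set ρ₁ : G₁ ⟶ G := biprod.inl ≫ e.inv ≫ ρ with hρ₁
  set u : G ⟶ G := β₁ ≫ ρ₁ with hu'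
  haveI huiso : IsIso u := isIso_of_isUnit hu
  set ε : G₁ ⟶ G₁ := ρ₁ ≫ inv u ≫ β₁ with hε
  have haux : ∀ {Z : A} (k : G ⟶ Z), β₁ ≫ ρ₁ ≫ inv u ≫ k = k := by
    intro Z k
    rw [← Category.assoc, ← hu']
    simp
  have hεε : ε ≫ ε = ε := by
    rw [hε]
    simp only [Category.assoc]
    rw [haux β₁]
  have huu : β₁ ≫ ε ≫ ρ₁ = u := by
    rw [hε]
    simp only [Category.assoc]
    rw [haux (β₁ ≫ ρ₁), ← hu']
  have hε1 : ε = 𝟙 G₁ := by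
    have hdich : IsUnit (M := End G₁) ε ∨ IsUnit (M := End G₁) (𝟙 G₁ - ε) := by
      refine local_ring_add (End G₁) ?_
      have h1 : (ε + (𝟙 G₁ - ε) : G₁ ⟶ G₁) = 𝟙 G₁ := by simp
      show IsUnit (M := End G₁) (ε + (𝟙 G₁ - ε))
      rw [h1]
      exact isUnit_one
    rcases hdich with h | h
    · haveI := isIso_of_isUnit h
      have : ε ≫ ε = ε ≫ 𝟙 G₁ := by rw [hεε]; simp
      exact (cancel_epi ε).1 this
    · haveI := isIso_of_isUnit h
      have hε0 : ε = 0 := by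
        have : ε ≫ (𝟙 G₁ - ε) = 0 ≫ (𝟙 G₁ - ε) := by
          simp [Preadditive.comp_sub, hεε]
        exact (cancel_mono (𝟙 G₁ - ε)).1 this
      exfalso
      have hu0 : u = 0 := by rw [← huu, hε0]; simp
      have h2 : inv u ≫ u = inv u ≫ 0 := congrArg (fun t => inv u ≫ t) hu0
      have : 𝟙 G = (0 : G ⟶ G) := by
        rw [← IsIso.inv_hom_id u, h2]
        simp
      exact one_ne_zero (α := End G) this
  haveI hβ₁iso : IsIso β₁ := by
    refine ⟨ρ₁ ≫ inv u, ?_, ?_⟩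
    · rw [← Category.assoc, ← hu']
      simp
    · rw [Category.assoc, ← hε, hε1]
  set R : G₁ ⊞ Y₁ ⟶ G₁ ⊞ Y₁ :=
    𝟙 (G₁ ⊞ Y₁) + biprod.fst ≫ (inv β₁ ≫ β₂) ≫ biprod.inr with hR
  haveI hRiso : IsIso R := by
    rw [hR]
    apply isIso_id_add
    simp [Category.assoc]
  set N : G ⊞ Y₁ ⟶ G₁ ⊞ Y₁ := biprod.desc (β ≫ e.hom) biprod.inr with hN
  have hβ'dec : β ≫ e.hom = β₁ ≫ biprod.inl + β₂ ≫ biprod.inr := by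
    rw [hβ₁, hβ₂]
    simpa [Category.assoc] using into_biprod (β ≫ e.hom)
  have hNeq : N = biprod.map β₁ (𝟙 Y₁) ≫ R := by
    apply biprod.hom_ext'
    · rw [hN, hR]
      simp only [biprod.inl_desc, biprod.inl_map_assoc]
      rw [hβ'dec]
      simp [Preadditive.comp_add, Category.assoc]
    · rw [hN, hR]
      simp [Preadditive.comp_add, Category.assoc]
  haveI : IsIso (biprod.map β₁ (𝟙 Y₁)) := isIso_map_left β₁ hβ₁iso
  haveI hNiso : IsIso N := by
    rw [hNeq]; infer_instance
  refine ⟨asIso N ≪≫ e.symm, ?_⟩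
  simp [hN]

lemma split_off : ∀ (n : ℕ) (X : A), LocalSum (n+1) X → ∀ (G : A), IsLocalRing (End G) →
    ∀ (β : G ⟶ X) (ρ : X ⟶ G), β ≫ ρ = 𝟙 G →
    ∃ (Y : A), LocalSum n Y ∧ ∃ (ψ : G ⊞ Y ≅ X), biprod.inl ≫ ψ.hom = β := by
  intro n
  induction n with
  | zero =>
    intro X hX G hG β ρ hβρ
    obtain ⟨G₁, Y₁, hG₁, hY₁, ⟨e⟩⟩ := hX
    haveI := hG
    have hβ₂0 : β ≫ e.hom ≫ biprod.snd = 0 := hY₁.eq_of_tgt _ _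
    have hsum : (β ≫ e.hom ≫ biprod.fst) ≫ (biprod.inl ≫ e.inv ≫ ρ) +
        (β ≫ e.hom ≫ biprod.snd) ≫ (biprod.inr ≫ e.inv ≫ ρ) = 𝟙 G := by
      have h2 : (β ≫ e.hom) ≫ (biprod.fst ≫ biprod.inl + biprod.snd ≫ biprod.inr) ≫
          (e.inv ≫ ρ) = 𝟙 G := by
        rw [biprod.total]
        simp [hβρ]
      rw [← h2]
      simp only [Preadditive.add_comp, Preadditive.comp_add, Category.assoc]
    have hu : IsUnit (M := End G)
        ((β ≫ e.hom ≫ biprod.fst) ≫ (biprod.inl ≫ e.inv ≫ ρ)) := by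
      have : (β ≫ e.hom ≫ biprod.fst) ≫ (biprod.inl ≫ e.inv ≫ ρ) = 𝟙 G := by
        rw [← hsum, hβ₂0]
        simp
      rw [this]
      exact isUnit_one
    obtain ⟨ψ, hψ⟩ := case_A hG hG₁ e β ρ hβρ hu
    exact ⟨Y₁, hY₁, ψ, hψ⟩
  | succ m ih =>
    intro X hX G hG β ρ hβρ
    obtain ⟨G₁, Y₁, hG₁, hY₁, ⟨e⟩⟩ := hX
    haveI := hG
    have hsum : (β ≫ e.hom ≫ biprod.fst) ≫ (biprod.inl ≫ e.inv ≫ ρ) +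
        (β ≫ e.hom ≫ biprod.snd) ≫ (biprod.inr ≫ e.inv ≫ ρ) = 𝟙 G := by
      have h2 : (β ≫ e.hom) ≫ (biprod.fst ≫ biprod.inl + biprod.snd ≫ biprod.inr) ≫
          (e.inv ≫ ρ) = 𝟙 G := by
        rw [biprod.total]
        simp [hβρ]
      rw [← h2]
      simp only [Preadditive.add_comp, Preadditive.comp_add, Category.assoc]
    have hdich := local_ring_add (End G)
      (a := (β ≫ e.hom ≫ biprod.fst) ≫ (biprod.inl ≫ e.inv ≫ ρ))
      (b := (β ≫ e.hom ≫ biprod.snd) ≫ (biprod.inr ≫ e.inv ≫ ρ))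
      (by
        show IsUnit (M := End G) ((β ≫ e.hom ≫ biprod.fst) ≫ (biprod.inl ≫ e.inv ≫ ρ) +
          (β ≫ e.hom ≫ biprod.snd) ≫ (biprod.inr ≫ e.inv ≫ ρ))
        rw [hsum]
        exact isUnit_one)
    rcases hdich with hu | hu
    · obtain ⟨ψ, hψ⟩ := case_A hG hG₁ e β ρ hβρ hu
      exact ⟨Y₁, hY₁, ψ, hψ⟩
    · -- case B: recurse into Y₁
      set β₂ : G ⟶ Y₁ := β ≫ e.hom ≫ biprod.snd with hβ₂
      set ρ₂ : Y₁ ⟶ G := biprod.inr ≫ e.inv ≫ ρ with hρ₂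
      set v : G ⟶ G := β₂ ≫ ρ₂ with hv
      haveI hviso : IsIso v := isIso_of_isUnit hu
      have hrec : β₂ ≫ (ρ₂ ≫ inv v) = 𝟙 G := by
        rw [← Category.assoc, ← hv]
        simp
      obtain ⟨Y₂, hY₂, ψ₂, hψ₂⟩ := ih Y₁ hY₁ G hG β₂ (ρ₂ ≫ inv v) hrec
      set β₁ : G ⟶ G₁ := β ≫ e.hom ≫ biprod.fst with hβ₁
      have hβ₂ψ : β₂ ≫ ψ₂.inv = biprod.inl := by
        rw [← hψ₂]
        simp
      set j₁ : G₁ ⟶ G ⊞ (G₁ ⊞ Y₂) := biprod.inl ≫ biprod.inr with hj₁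
      set Φ : G ⊞ (G₁ ⊞ Y₂) ⟶ G₁ ⊞ Y₁ :=
        biprod.desc (β ≫ e.hom)
          (biprod.desc biprod.inl (biprod.inr ≫ ψ₂.hom ≫ biprod.inr)) with hΦ
      set Θ : G₁ ⊞ Y₁ ⟶ G ⊞ (G₁ ⊞ Y₂) :=
        biprod.desc j₁
          (ψ₂.inv ≫ biprod.desc (biprod.inl - β₁ ≫ j₁) (biprod.inr ≫ biprod.inr)) with hΘ
      have hβ'dec : β ≫ e.hom = β₁ ≫ biprod.inl + β₂ ≫ biprod.inr := by
        rw [hβ₁, hβ₂]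
        simpa [Category.assoc] using into_biprod (β ≫ e.hom)
      have hΦΘ : Φ ≫ Θ = 𝟙 _ := by
        apply biprod.hom_ext'
        · rw [hΦ, hΘ]
          simp only [biprod.inl_desc_assoc, Category.comp_id]
          rw [hβ'dec]
          simp only [Preadditive.add_comp, Category.assoc, biprod.inl_desc, biprod.inr_desc]
          rw [← Category.assoc β₂ ψ₂.inv, hβ₂ψ]
          simp [Preadditive.comp_sub]
        · rw [hΦ, hΘ]
          apply biprod.hom_ext'
          · simp [hj₁]
          · simp [hβ₂ψ]
      have hkey : biprod.desc (biprod.inl - β₁ ≫ j₁) (biprod.inr ≫ biprod.inr) ≫ Φ =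
          ψ₂.hom ≫ biprod.inr := by
        apply biprod.hom_ext'
        · rw [hΦ]
          simp only [biprod.inl_desc_assoc, Preadditive.sub_comp, Category.assoc,
            biprod.inl_desc, biprod.inr_desc]
          rw [hβ'dec, hj₁]
          simp only [Category.assoc, biprod.inr_desc, biprod.inl_desc]
          rw [← Category.assoc, hψ₂]
          abel
        · rw [hΦ]
          simp only [biprod.inr_desc_assoc, Category.assoc, biprod.inr_desc]
      have hΘΦ : Θ ≫ Φ = 𝟙 _ := by
        apply biprod.hom_ext'
        · rw [hΦ, hΘ]
          simp [hj₁]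
        · rw [hΘ]
          simp only [biprod.inr_desc_assoc, Category.assoc]
          rw [hkey]
          simp
      haveI : IsIso Φ := ⟨Θ, hΦΘ, hΘΦ⟩
      refine ⟨G₁ ⊞ Y₂, ⟨G₁, Y₂, hG₁, hY₂, ⟨Iso.refl _⟩⟩, asIso Φ ≪≫ e.symm, ?_⟩
      simp [hΦ]
lemma exists_compression {X : A} {h : X ⟶ X} (hn : ¬ Rad X h) :
    ∃ (G : A), IsLocalRing (End G) ∧ ∃ (a : X ⟶ G) (b : G ⟶ X), IsIso (b ≫ h ≫ a) := by
  unfold Rad at hn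
  push_neg at hn
  obtain ⟨G, hG, a, b, hu⟩ := hn
  exact ⟨G, hG, a, b, isIso_of_isUnit hu⟩

lemma right_min_version : ∀ (n : ℕ) (X : A), LocalSum n X → ∀ (M : A) (f : X ⟶ M),
    ∃ (E : A) (s : E ⟶ X) (r : X ⟶ E), s ≫ r = 𝟙 E ∧ f = r ≫ s ≫ f ∧ RightMinimal (s ≫ f) := by
  intro n
  induction n with
  | zero =>
    intro X hX M f
    refine ⟨X, 𝟙 X, 𝟙 X, by simp, by simp, ?_⟩
    intro g hg
    have : g = 𝟙 X := hX.eq_of_src _ _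
    rw [this]
    infer_instance
  | succ m ih =>
    intro X hX M f
    by_cases hmin : RightMinimal f
    · refine ⟨X, 𝟙 X, 𝟙 X, by simp, by simp, ?_⟩
      rw [Category.id_comp]
      exact hmin
    · unfold RightMinimal at hmin
      push_neg at hmin
      obtain ⟨g, hg1, hg2⟩ := hmin
      set h : X ⟶ X := 𝟙 X - g with hh
      have hfh : h ≫ f = 0 := by
        rw [hh]
        simp [Preadditive.sub_comp, hg1]
      have hnrad : ¬ Rad X h := by
        intro hr
        apply hg2
        have := isIso_one_sub_of_rad (m+1) X hX h hr
        have e : 𝟙 X - h = g := by rw [hh]; simp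
        rwa [e] at this
      obtain ⟨G, hG, a, b, hc⟩ := exists_compression hnrad
      haveI := hc
      set β : G ⟶ X := inv (b ≫ h ≫ a) ≫ b ≫ h with hβ
      have hβa : β ≫ a = 𝟙 G := by
        rw [hβ]
        simp only [Category.assoc]
        exact IsIso.inv_hom_id (b ≫ h ≫ a)
      have hβf : β ≫ f = 0 := by
        rw [hβ]
        simp only [Category.assoc, hfh, comp_zero]
      obtain ⟨Y, hY, ψ, hψ⟩ := split_off m X hX G hG β a hβa
      set f' : Y ⟶ M := biprod.inr ≫ ψ.hom ≫ f with hf'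
      have hdec : ψ.hom ≫ f = biprod.snd ≫ f' := by
        apply biprod.hom_ext'
        · rw [← Category.assoc, hψ]
          simp [hβf]
        · rw [hf']
          simp
      have hffact : f = ψ.inv ≫ biprod.snd ≫ f' := by
        rw [← hdec]
        simp
      obtain ⟨E, s₂, r₂, hsr, hfeq, hmin'⟩ := ih Y hY M f'
      have hsf : (s₂ ≫ biprod.inr ≫ ψ.hom) ≫ f = s₂ ≫ f' := by
        rw [hf']
        simp only [Category.assoc]
      refine ⟨E, s₂ ≫ biprod.inr ≫ ψ.hom, ψ.inv ≫ biprod.snd ≫ r₂, ?_, ?_, ?_⟩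
      · simp only [Category.assoc, Iso.hom_inv_id_assoc]
        simp only [biprod.inr_snd_assoc]
        simp [hsr]
      · have h4 : (ψ.inv ≫ biprod.snd ≫ r₂) ≫ (s₂ ≫ biprod.inr ≫ ψ.hom) ≫ f
            = ψ.inv ≫ biprod.snd ≫ (r₂ ≫ s₂ ≫ f') := by
          rw [hsf]
          simp only [Category.assoc]
        rw [h4, ← hfeq]
        exact hffact
      · rw [hsf]
        exact hmin'

lemma left_min_version : ∀ (n : ℕ) (X : A), LocalSum n X → ∀ (M : A) (f : M ⟶ X),
    ∃ (E : A) (r : X ⟶ E) (s : E ⟶ X), s ≫ r = 𝟙 E ∧ f = f ≫ r ≫ s ∧ LeftMinimal (f ≫ r) := by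
  intro n
  induction n with
  | zero =>
    intro X hX M f
    refine ⟨X, 𝟙 X, 𝟙 X, by simp, by simp, ?_⟩
    intro u hu
    have : u = 𝟙 X := hX.eq_of_src _ _
    rw [this]
    infer_instance
  | succ m ih =>
    intro X hX M f
    by_cases hmin : LeftMinimal f
    · refine ⟨X, 𝟙 X, 𝟙 X, by simp, by simp, ?_⟩
      rw [Category.comp_id]
      exact hmin
    · unfold LeftMinimal at hmin
      push_neg at hmin
      obtain ⟨u, hu1, hu2⟩ := hmin
      set h : X ⟶ X := 𝟙 X - u with hh
      have hfh : f ≫ h = 0 := by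
        rw [hh]
        simp [Preadditive.comp_sub, hu1]
      have hnrad : ¬ Rad X h := by
        intro hr
        apply hu2
        have := isIso_one_sub_of_rad (m+1) X hX h hr
        have e : 𝟙 X - h = u := by rw [hh]; simp
        rwa [e] at this
      obtain ⟨G, hG, a, b, hc⟩ := exists_compression hnrad
      haveI := hc
      set γ : X ⟶ G := h ≫ a ≫ inv (b ≫ h ≫ a) with hγ
      have hbγ : b ≫ γ = 𝟙 G := by
        rw [hγ]
        have e9 : b ≫ h ≫ a ≫ inv (b ≫ h ≫ a) = (b ≫ h ≫ a) ≫ inv (b ≫ h ≫ a) := by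
          simp only [Category.assoc]
        rw [e9, IsIso.hom_inv_id]
      have hfγ : f ≫ γ = 0 := by
        rw [hγ, ← Category.assoc, hfh]
        simp
      obtain ⟨Y, hY, ψ, hψ⟩ := split_off m X hX G hG b γ hbγ
      set d : G ⊞ Y ⟶ G := ψ.hom ≫ γ with hd
      have hdinl : biprod.inl ≫ d = 𝟙 G := by
        rw [hd, ← Category.assoc, hψ]
        exact hbγ
      set W : G ⊞ Y ⟶ G ⊞ Y := biprod.lift d biprod.snd with hW
      have hWinl : biprod.inl ≫ W = biprod.inl := by
        rw [hW]
        apply biprod.hom_ext <;> simp [hdinl]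
      have hWfst : W ≫ biprod.fst = d := by rw [hW]; simp
      have hWsnd : W ≫ biprod.snd = biprod.snd := by rw [hW]; simp
      have hN : W - 𝟙 (G ⊞ Y) = (d - biprod.fst) ≫ biprod.inl := by
        apply biprod.hom_ext
        · simp [Preadditive.sub_comp, hWfst]
        · simp [Preadditive.sub_comp, hWsnd]
      have h3 : biprod.inl ≫ (d - biprod.fst) = 0 := by
        simp [Preadditive.comp_sub, hdinl]
      have hsq : (W - 𝟙 (G ⊞ Y)) ≫ (W - 𝟙 (G ⊞ Y)) = 0 := by
        rw [hN]
        calc ((d - biprod.fst) ≫ biprod.inl) ≫ (d - biprod.fst) ≫ biprod.inl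
            = (d - biprod.fst) ≫ (biprod.inl ≫ (d - biprod.fst)) ≫ biprod.inl := by
              simp only [Category.assoc]
          _ = 0 := by rw [h3]; simp
      haveI hWiso : IsIso W := by
        have : W = 𝟙 (G ⊞ Y) + (W - 𝟙 (G ⊞ Y)) := by abel
        rw [this]
        exact isIso_id_add _ hsq
      set f' : M ⟶ Y := f ≫ ψ.inv ≫ biprod.snd with hf'd
      have hzfst : (f ≫ ψ.inv ≫ W) ≫ biprod.fst = 0 := by
        simp only [Category.assoc, hWfst]
        rw [hd]
        simp only [Iso.inv_hom_id_assoc]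
        exact hfγ
      have hdec : f ≫ ψ.inv ≫ W = f' ≫ biprod.inr := by
        have h5 := into_biprod (f ≫ ψ.inv ≫ W)
        rw [hzfst] at h5
        simp only [zero_comp, zero_add] at h5
        rw [h5]
        simp only [Category.assoc, hWsnd, hf'd]
      obtain ⟨E, r₂, s₂, hsr, hfeq, hmin'⟩ := ih Y hY M f'
      have hfr : f ≫ (ψ.inv ≫ W ≫ biprod.snd ≫ r₂) = f' ≫ r₂ := by
        have : f ≫ ψ.inv ≫ W ≫ biprod.snd ≫ r₂ = (f ≫ ψ.inv ≫ W) ≫ biprod.snd ≫ r₂ := by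
          simp only [Category.assoc]
        rw [this, hdec]
        simp
      refine ⟨E, ψ.inv ≫ W ≫ biprod.snd ≫ r₂, s₂ ≫ biprod.inr ≫ inv W ≫ ψ.hom, ?_, ?_, ?_⟩
      · simp only [Category.assoc, Iso.hom_inv_id_assoc, IsIso.inv_hom_id_assoc]
        simp only [biprod.inr_snd_assoc]
        simp [hsr]
      · have step1 : f ≫ (ψ.inv ≫ W ≫ biprod.snd ≫ r₂) ≫ s₂ ≫ biprod.inr ≫ inv W ≫ ψ.hom
            = (f ≫ ψ.inv ≫ W) ≫ biprod.snd ≫ r₂ ≫ s₂ ≫ biprod.inr ≫ inv W ≫ ψ.hom := by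
          simp only [Category.assoc]
        rw [step1, hdec]
        simp only [Category.assoc, biprod.inr_snd_assoc]
        have step2 : f' ≫ r₂ ≫ s₂ ≫ biprod.inr ≫ inv W ≫ ψ.hom
            = (f' ≫ r₂ ≫ s₂) ≫ biprod.inr ≫ inv W ≫ ψ.hom := by simp only [Category.assoc]
        rw [step2, ← hfeq]
        have step3 : f' ≫ biprod.inr ≫ inv W ≫ ψ.hom
            = (f' ≫ biprod.inr) ≫ inv W ≫ ψ.hom := by simp only [Category.assoc]
        rw [step3, ← hdec]
        simp
      · rw [hfr]
        exact hmin'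

lemma localSum_of_iso {n : ℕ} {X Y : A} (e : X ≅ Y) (h : LocalSum n Y) : LocalSum n X := by
  cases n with
  | zero => exact h.of_iso e
  | succ m =>
    obtain ⟨G, Z, hG, hZ, ⟨e'⟩⟩ := h
    exact ⟨G, Z, hG, hZ, ⟨e ≪≫ e'⟩⟩

lemma localSum_biproduct : ∀ (n : ℕ) (g : Fin n → A), (∀ j, IsLocalRing (End (g j))) →
    LocalSum n (⨁ g) := by
  intro n
  induction n with
  | zero =>
    intro g _
    show IsZero (⨁ g)
    rw [IsZero.iff_id_eq_zero]
    apply biproduct.hom_ext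
    intro j
    exact j.elim0
  | succ m ih =>
    intro g hloc
    have tail := ih (fun i => g i.succ) (fun i => hloc i.succ)
    refine ⟨g 0, ⨁ (fun i : Fin m => g i.succ), hloc 0, tail, ⟨?_⟩⟩
    refine ⟨biprod.lift (biproduct.π g 0) (biproduct.lift (fun i => biproduct.π g i.succ)),
      biprod.desc (biproduct.ι g 0) (biproduct.desc (fun i => biproduct.ι g i.succ)), ?_, ?_⟩
    · apply biproduct.hom_ext'
      intro j
      simp only [Category.assoc, Category.comp_id]
      rw [biprod.lift_desc, biproduct.lift_desc]
      rw [Preadditive.comp_add, Preadditive.comp_sum]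
      induction j using Fin.cases with
      | zero =>
        rw [Finset.sum_eq_zero]
        · rw [← Category.assoc, biproduct.ι_π_self]
          simp
        · intro i _
          rw [← Category.assoc, biproduct.ι_π_ne _ (Fin.succ_ne_zero i).symm]
          simp
      | succ i₀ =>
        rw [Finset.sum_eq_single i₀]
        · rw [← Category.assoc, biproduct.ι_π_ne _ (Fin.succ_ne_zero i₀),
            ← Category.assoc, biproduct.ι_π_self]
          simp
        · intro i _ hne
          have hne' : (i₀.succ : Fin (m+1)) ≠ i.succ :=
            fun hcon => hne (Fin.succ_injective _ hcon).symm
          rw [← Category.assoc, biproduct.ι_π_ne _ hne']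
          simp
        · intro hmem
          exact absurd (Finset.mem_univ i₀) hmem
    · apply biprod.hom_ext'
      · simp only [biprod.inl_desc_assoc]
        apply biprod.hom_ext
        · simp
        · simp only [Category.assoc, biprod.lift_snd, biprod.inl_snd]
          apply biproduct.hom_ext
          intro i
          simp [biproduct.ι_π_ne _ (Fin.succ_ne_zero i).symm]
      · simp only [biprod.inr_desc_assoc]
        apply biprod.hom_ext
        · simp only [Category.assoc, biprod.lift_fst, biprod.inr_fst]
          apply biproduct.hom_ext'
          intro i
          simp [biproduct.ι_π_ne _ (Fin.succ_ne_zero i)]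
        · simp only [Category.assoc, biprod.lift_snd, biprod.inr_snd, Category.comp_id]
          apply biproduct.hom_ext'
          intro i
          apply biproduct.hom_ext
          intro i'
          simp only [biproduct.ι_desc_assoc, Category.assoc, biproduct.lift_π,
            Category.id_comp]
          by_cases hii : i = i'
          · subst hii
            simp
          · have hs : (i.succ : Fin (m+1)) ≠ i'.succ :=
              fun hcon => hii (Fin.succ_injective _ hcon)
            rw [biproduct.ι_π_ne _ hs, biproduct.ι_π_ne _ hii]

lemma ks_localSum (hKS : KrullSchmidt A) (X : A) : ∃ n, LocalSum n X := by
  obtain ⟨n, g, hloc, ⟨e⟩⟩ := hKS X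
  exact ⟨n, localSum_of_iso e (localSum_biproduct n g hloc)⟩


lemma ses_w {X E Y : A} {i : X ⟶ E} {p : E ⟶ Y} (h : IsShortExactSeq i p) : i ≫ p = 0 :=
  h.choose

lemma ses_mono {X E Y : A} {i : X ⟶ E} {p : E ⟶ Y} (h : IsShortExactSeq i p) : Mono i := by
  obtain ⟨w, hS⟩ := h
  exact hS.mono_f

lemma ses_epi {X E Y : A} {i : X ⟶ E} {p : E ⟶ Y} (h : IsShortExactSeq i p) : Epi p := by
  obtain ⟨w, hS⟩ := h
  exact hS.epi_g

lemma ses_lift {X E Y : A} {i : X ⟶ E} {p : E ⟶ Y} (h : IsShortExactSeq i p)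
    {Z : A} (k : Z ⟶ E) (hk : k ≫ p = 0) : ∃ l : Z ⟶ X, l ≫ i = k := by
  obtain ⟨w, hS⟩ := h
  haveI := hS.mono_f
  exact hS.exact.lift' k hk

lemma ses_desc {X E Y : A} {i : X ⟶ E} {p : E ⟶ Y} (h : IsShortExactSeq i p)
    {Z : A} (k : E ⟶ Z) (hk : i ≫ k = 0) : ∃ l : Y ⟶ Z, p ≫ l = k := by
  obtain ⟨w, hS⟩ := h
  haveI := hS.epi_g
  exact hS.exact.desc' k hk

lemma ses_of_kernel {U M : A} (p : U ⟶ M) [Epi p] : IsShortExactSeq (kernel.ι p) p := by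
  refine ⟨kernel.condition p, ?_⟩
  refine ⟨?_⟩
  exact ShortComplex.exact_of_f_is_kernel _ (kernelIsKernel p)

lemma ses_of_kernel_fork {X E Y : A} {i : X ⟶ E} {p : E ⟶ Y} [Epi p] [Mono i]
    (w : i ≫ p = 0)
    (hlim : ∀ {Z : A} (k : Z ⟶ E), k ≫ p = 0 → ∃ l : Z ⟶ X, l ≫ i = k) :
    IsShortExactSeq i p := by
  refine ⟨w, ⟨?_⟩⟩
  apply ShortComplex.exact_of_f_is_kernel
  exact KernelFork.IsLimit.ofι' i w (fun k hk => ⟨(hlim k hk).choose, (hlim k hk).choose_spec⟩)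

lemma ses_of_cokernel_cofork {X E Y : A} {i : X ⟶ E} {p : E ⟶ Y} [Epi p] [Mono i]
    (w : i ≫ p = 0)
    (hcolim : ∀ {Z : A} (k : E ⟶ Z), i ≫ k = 0 → ∃ l : Y ⟶ Z, p ≫ l = k) :
    IsShortExactSeq i p := by
  refine ⟨w, ⟨?_⟩⟩
  apply ShortComplex.exact_of_g_is_cokernel
  exact CokernelCofork.IsColimit.ofπ' p w
    (fun k hk => ⟨(hcolim k hk).choose, (hcolim k hk).choose_spec⟩)

lemma ses_iso_left {X X' E Y : A} (e : X' ≅ X) {i : X ⟶ E} {p : E ⟶ Y}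
    (h : IsShortExactSeq i p) : IsShortExactSeq (e.hom ≫ i) p := by
  obtain ⟨w, hS⟩ := h
  refine ⟨by rw [Category.assoc, w, comp_zero], ?_⟩
  refine ShortComplex.shortExact_of_iso (S₁ := ShortComplex.mk i p w) ?_ hS
  exact ShortComplex.isoMk e.symm (Iso.refl _) (Iso.refl _) (by simp) (by simp)

lemma ses_snoc {X E Y Y' : A} (e : Y ≅ Y') {i : X ⟶ E} {p : E ⟶ Y}
    (h : IsShortExactSeq i p) : IsShortExactSeq i (p ≫ e.hom) := by
  obtain ⟨w, hS⟩ := h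
  refine ⟨by rw [← Category.assoc, w, zero_comp], ?_⟩
  refine ShortComplex.shortExact_of_iso (S₁ := ShortComplex.mk i p w) ?_ hS
  exact ShortComplex.isoMk (Iso.refl _) (Iso.refl _) e (by simp) (by simp)

/-- Pushout of a short exact sequence along a morphism out of its kernel. -/
lemma ses_pushout {K P M T : A} {iK : K ⟶ P} {pP : P ⟶ M} (hses : IsShortExactSeq iK pP)
    (g : K ⟶ T) :
    ∃ (E : A) (i : T ⟶ E) (f : E ⟶ M) (j : P ⟶ E),
      IsShortExactSeq i f ∧ iK ≫ j = g ≫ i ∧ j ≫ f = pP ∧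
      (∀ {Z : A} (h : T ⟶ Z) (k : P ⟶ Z), g ≫ h = iK ≫ k →
        ∃ ψ : E ⟶ Z, i ≫ ψ = h ∧ j ≫ ψ = k) ∧
      (∀ {Z : A} (t₁ t₂ : E ⟶ Z), i ≫ t₁ = i ≫ t₂ → j ≫ t₁ = j ≫ t₂ → t₁ = t₂) := by
  haveI := ses_mono hses
  haveI := ses_epi hses
  have h0 : g ≫ (0 : T ⟶ M) = iK ≫ pP := by rw [ses_w hses, comp_zero]
  refine ⟨pushout g iK, pushout.inl g iK, pushout.desc 0 pP h0, pushout.inr g iK, ?_, ?_, ?_,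
    ?_, ?_⟩
  · haveI : Mono (pushout.inl g iK) := Abelian.mono_pushout_of_mono_g g iK
    haveI : Epi (pushout.desc (0 : T ⟶ M) pP h0) := by
      have : pushout.inr g iK ≫ pushout.desc (0 : T ⟶ M) pP h0 = pP := pushout.inr_desc _ _ _
      exact epi_of_epi_fac this
    apply ses_of_cokernel_cofork
    · exact pushout.inl_desc _ _ _
    · intro Z k hk
      have hk2 : iK ≫ pushout.inr g iK ≫ k = 0 := by
        rw [← Category.assoc, pushout.condition.symm, Category.assoc, hk, comp_zero]
      obtain ⟨l, hl⟩ := ses_desc hses (pushout.inr g iK ≫ k) hk2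
      refine ⟨l, ?_⟩
      apply pushout.hom_ext
      · rw [pushout.inl_desc_assoc]
        rw [zero_comp, hk]
      · rw [pushout.inr_desc_assoc, hl]
  · exact pushout.condition.symm
  · exact pushout.inr_desc _ _ _
  · intro Z h k hcomp
    exact ⟨pushout.desc h k hcomp, pushout.inl_desc _ _ _, pushout.inr_desc _ _ _⟩
  · intro Z t₁ t₂ h1 h2
    exact pushout.hom_ext h1 h2

/-- Pullback of a short exact sequence along a morphism into its cokernel. -/
lemma ses_pullback {T E M X' : A} {i : T ⟶ E} {f : E ⟶ M} (hses : IsShortExactSeq i f)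
    (g : X' ⟶ M) :
    ∃ (V : A) (κ : T ⟶ V) (q : V ⟶ X') (v : V ⟶ E),
      IsShortExactSeq κ q ∧ κ ≫ v = i ∧ v ≫ f = q ≫ g ∧
      (∀ {Z : A} (b : Z ⟶ E) (c : Z ⟶ X'), b ≫ f = c ≫ g →
        ∃ m : Z ⟶ V, m ≫ v = b ∧ m ≫ q = c) := by
  haveI := ses_mono hses
  haveI := ses_epi hses
  have h0 : i ≫ f = (0 : T ⟶ X') ≫ g := by rw [ses_w hses, zero_comp]
  refine ⟨pullback f g, pullback.lift i 0 h0, pullback.snd f g, pullback.fst f g, ?_,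
    pullback.lift_fst _ _ _, pullback.condition, ?_⟩
  · haveI : Epi (pullback.snd f g) := Abelian.epi_pullback_of_epi_f f g
    haveI : Mono (pullback.lift i (0 : T ⟶ X') h0) := by
      have : pullback.lift i (0 : T ⟶ X') h0 ≫ pullback.fst f g = i := pullback.lift_fst _ _ _
      exact mono_of_mono_fac this
    apply ses_of_kernel_fork
    · exact pullback.lift_snd _ _ _
    · intro Z k hk
      have hkf : (k ≫ pullback.fst f g) ≫ f = 0 := by
        rw [Category.assoc, pullback.condition, ← Category.assoc, hk, zero_comp]
      obtain ⟨l, hl⟩ := ses_lift hses (k ≫ pullback.fst f g) hkf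
      refine ⟨l, ?_⟩
      apply pullback.hom_ext
      · simp only [Category.assoc, pullback.lift_fst, hl]
      · simp only [Category.assoc, pullback.lift_snd, comp_zero, hk]
  · intro Z b c hbc
    exact ⟨pullback.lift b c hbc, pullback.lift_fst _ _ _, pullback.lift_snd _ _ _⟩

/-- Kernel of the composite of two epis in short exact sequences. -/
lemma ses_comp_kernel {T' U E T M : A} {iξ : T' ⟶ U} {p : U ⟶ E} (hξ : IsShortExactSeq iξ p)
    {iT : T ⟶ E} {f : E ⟶ M} (hf : IsShortExactSeq iT f) :
    ∃ (W : A) (ιW : W ⟶ U) (κ : T' ⟶ W) (w : W ⟶ T),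
      IsShortExactSeq ιW (p ≫ f) ∧ κ ≫ ιW = iξ ∧ w ≫ iT = ιW ≫ p ∧ IsShortExactSeq κ w := by
  haveI := ses_mono hξ
  haveI := ses_epi hξ
  haveI := ses_mono hf
  haveI := ses_epi hf
  haveI : Epi (p ≫ f) := epi_comp p f
  set W := kernel (p ≫ f)
  set ιW : W ⟶ U := kernel.ι (p ≫ f) with hιW
  have hκ0 : iξ ≫ p ≫ f = 0 := by rw [← Category.assoc, ses_w hξ, zero_comp]
  set κ : T' ⟶ W := kernel.lift (p ≫ f) iξ hκ0 with hκ
  have hw0 : (ιW ≫ p) ≫ f = 0 := by rw [Category.assoc]; exact kernel.condition _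
  obtain ⟨w, hw⟩ := ses_lift hf (ιW ≫ p) hw0
  have hκι : κ ≫ ιW = iξ := kernel.lift_ι _ _ _
  refine ⟨W, ιW, κ, w, ses_of_kernel _, hκι, hw, ?_⟩
  haveI hκmono : Mono κ := mono_of_mono_fac hκι
  -- w is epi via pullback
  haveI hwepi : Epi w := by
    set m : pullback p iT ⟶ W := kernel.lift (p ≫ f) (pullback.fst p iT)
      (by rw [← Category.assoc, pullback.condition, Category.assoc, ses_w hf, comp_zero]) with hm
    have hmw : m ≫ w = pullback.snd p iT := by
      haveI := ses_mono hf
      rw [← cancel_mono iT]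
      rw [Category.assoc, hw, ← Category.assoc, hm, kernel.lift_ι, pullback.condition]
    haveI : Epi (pullback.snd p iT) := Abelian.epi_pullback_of_epi_f p iT
    exact epi_of_epi_fac hmw
  have hκw0 : κ ≫ w = 0 := by
    rw [← cancel_mono iT, Category.assoc, hw, zero_comp, ← Category.assoc, hκι, ses_w hξ]
  apply ses_of_kernel_fork hκw0
  intro Z z hz
  have hzp : (z ≫ ιW) ≫ p = 0 := by
    rw [Category.assoc, ← hw, ← Category.assoc, hz, zero_comp]
  obtain ⟨l, hl⟩ := ses_lift hξ (z ≫ ιW) hzp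
  refine ⟨l, ?_⟩
  haveI : Mono ιW := by rw [hιW]; infer_instance
  rw [← cancel_mono ιW, Category.assoc, hκι, hl]

lemma ses_retraction_of_section {T U E : A} {i : T ⟶ U} {p : U ⟶ E}
    (h : IsShortExactSeq i p) (σ : E ⟶ U) (hσ : σ ≫ p = 𝟙 E) : ∃ r : U ⟶ T, i ≫ r = 𝟙 T := by
  haveI := ses_mono h
  have he : (𝟙 U - p ≫ σ) ≫ p = 0 := by
    rw [Preadditive.sub_comp, Category.id_comp, Category.assoc, hσ, Category.comp_id, sub_self]
  obtain ⟨l, hl⟩ := ses_lift h (𝟙 U - p ≫ σ) he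
  refine ⟨l, ?_⟩
  rw [← cancel_mono i, Category.assoc, hl, Category.id_comp, Preadditive.comp_sub,
    Category.comp_id, ← Category.assoc, ses_w h, zero_comp, sub_zero]

lemma ses_section_of_retraction {T U E : A} {i : T ⟶ U} {p : U ⟶ E}
    (h : IsShortExactSeq i p) (ρ : U ⟶ T) (hρ : i ≫ ρ = 𝟙 T) : ∃ σ : E ⟶ U, σ ≫ p = 𝟙 E := by
  haveI := ses_epi h
  have he : i ≫ (𝟙 U - ρ ≫ i) = 0 := by
    rw [Preadditive.comp_sub, Category.comp_id, ← Category.assoc, hρ, Category.id_comp, sub_self]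
  obtain ⟨σ, hσ⟩ := ses_desc h (𝟙 U - ρ ≫ i) he
  refine ⟨σ, ?_⟩
  rw [← cancel_epi p, ← Category.assoc, hσ, Preadditive.sub_comp, Category.id_comp,
    Category.assoc, ses_w h, comp_zero, sub_zero, Category.comp_id]

lemma iso_of_ses_zero_right {tQ Q fQ : A} {iQ : tQ ⟶ Q} {pQ : Q ⟶ fQ}
    (hseq : IsShortExactSeq iQ pQ) (h0 : pQ = 0) : Nonempty (Q ≅ tQ) := by
  haveI := ses_mono hseq
  obtain ⟨l, hl⟩ := ses_lift hseq (𝟙 Q) (by rw [h0, comp_zero])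
  have hinv : iQ ≫ l = 𝟙 tQ := by
    rw [← cancel_mono iQ, Category.assoc, hl, Category.id_comp, Category.comp_id]
  exact ⟨⟨l, iQ, hl, hinv⟩⟩

lemma torsion_quot (P : TorsionPair A) {T Q : A} (hT : T ∈ P.tors) (e : T ⟶ Q) [Epi e] :
    ∃ Q' ∈ P.tors, Nonempty (Q ≅ Q') := by
  obtain ⟨tQ, fQ, iQ, pQ, htQ, hfQ, hseq⟩ := P.exists_seq Q
  have h1 : e ≫ pQ = 0 := P.hom_vanish hT hfQ _
  have hpQ : pQ = 0 := by
    rw [← cancel_epi e, h1, comp_zero]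
  obtain ⟨eiso⟩ := iso_of_ses_zero_right hseq hpQ
  exact ⟨tQ, htQ, ⟨eiso⟩⟩

lemma torsion_ext (P : TorsionPair A) {A₁ W B₁ : A} {i : A₁ ⟶ W} {p : W ⟶ B₁}
    (h : IsShortExactSeq i p)
    (hA : ∃ T ∈ P.tors, Nonempty (A₁ ≅ T)) (hB : ∃ T ∈ P.tors, Nonempty (B₁ ≅ T)) :
    ∃ T ∈ P.tors, Nonempty (W ≅ T) := by
  obtain ⟨TA, hTA, ⟨eA⟩⟩ := hA
  obtain ⟨TB, hTB, ⟨eB⟩⟩ := hB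
  obtain ⟨tW, fW, iW, pW, htW, hfW, hseqW⟩ := P.exists_seq W
  have h1 : eA.inv ≫ i ≫ pW = 0 := P.hom_vanish hTA hfW _
  have h2 : i ≫ pW = 0 := by
    rw [← cancel_epi eA.inv, h1, comp_zero]
  obtain ⟨t, ht⟩ := ses_desc h pW h2
  have h3 : eB.inv ≫ t = 0 := P.hom_vanish hTB hfW _
  have h4 : t = 0 := by rw [← cancel_epi eB.inv, h3, comp_zero]
  have hpW : pW = 0 := by rw [← ht, h4, comp_zero]
  obtain ⟨eiso⟩ := iso_of_ses_zero_right hseqW hpW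
  exact ⟨tW, htW, ⟨eiso⟩⟩


lemma part2a [EnoughProjectives A] (hKS : KrullSchmidt A) (P : TorsionPair A)
    (hcov : CovariantlyFinite P.tors) (M : A) :
    ∃ (T E : A) (i : T ⟶ E) (f : E ⟶ M),
      T ∈ P.tors ∧ IsShortExactSeq i f ∧ IsRightApprox (perpE P) f := by
  set Pr := Projective.over M with hPr
  set πM : Pr ⟶ M := Projective.π M with hπM
  set K := kernel πM with hK
  set iK : K ⟶ Pr := kernel.ι πM with hiK
  have hKP : IsShortExactSeq iK πM := ses_of_kernel πM
  obtain ⟨T0, g, hT0, happ⟩ := hcov K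
  obtain ⟨E0, i0, f0, j, hE0, hcomm, hjf, hdesc, hext⟩ := ses_pushout hKP g
  obtain ⟨n, hLS⟩ := ks_localSum hKS E0
  obtain ⟨E, s, r, hsr, hf0eq, hmin⟩ := right_min_version n E0 hLS M f0
  set f : E ⟶ M := s ≫ f0 with hfdef
  have hf0r : f0 = r ≫ f := by rw [hfdef]; exact hf0eq
  haveI hf0epi : Epi f0 := ses_epi hE0
  haveI hfepi : Epi f := epi_of_epi_fac hf0r.symm
  set T := kernel f with hT'
  set iT : T ⟶ E := kernel.ι f with hiT
  have hT : IsShortExactSeq iT f := ses_of_kernel f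
  have hd0 : (iT ≫ s) ≫ f0 = 0 := by
    rw [Category.assoc, ← hfdef]
    exact kernel.condition f
  obtain ⟨d, hd⟩ := ses_lift hE0 (iT ≫ s) hd0
  have hu0 : (i0 ≫ r) ≫ f = 0 := by
    rw [Category.assoc, ← hf0r]
    exact ses_w hE0
  set u : T0 ⟶ T := kernel.lift f (i0 ≫ r) hu0 with hu
  have huiT : u ≫ iT = i0 ≫ r := kernel.lift_ι _ _ _
  have hdu : d ≫ u = 𝟙 T := by
    haveI := ses_mono hT
    rw [← cancel_mono iT, Category.assoc, huiT, ← Category.assoc, hd, Category.assoc, hsr,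
      Category.comp_id, Category.id_comp]
  haveI : Epi u := epi_of_epi_fac hdu
  obtain ⟨Tt, hTt, ⟨eT⟩⟩ := torsion_quot P hT0 u
  have hses' : IsShortExactSeq (eT.symm.hom ≫ iT) f := ses_iso_left eT.symm hT
  have hEperp : E ∈ perpE P := by
    intro T' hT' U iξ pξ hξ
    obtain ⟨W, ιW, κ, w, hWses, hκι, hwiT, hκw⟩ := ses_comp_kernel hξ hT
    obtain ⟨TW, hTW, ⟨eW⟩⟩ := torsion_ext P hκw ⟨T', hT', ⟨Iso.refl _⟩⟩ ⟨Tt, hTt, ⟨eT⟩⟩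
    haveI : Epi pξ := ses_epi hξ
    haveI : Epi (pξ ≫ f) := epi_comp _ _
    set lP : Pr ⟶ U := Projective.factorThru πM (pξ ≫ f) with hlP
    have hlPc : lP ≫ pξ ≫ f = πM := Projective.factorThru_comp _ _
    have hδ0 : (iK ≫ lP) ≫ pξ ≫ f = 0 := by
      rw [Category.assoc, hlPc]
      exact kernel.condition πM
    obtain ⟨δ, hδ⟩ := ses_lift hWses (iK ≫ lP) hδ0
    obtain ⟨h', hh'⟩ := happ hTW (δ ≫ eW.hom)
    set h : T0 ⟶ W := h' ≫ eW.inv with hhdef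
    have hgh : g ≫ h = δ := by
      rw [hhdef, ← Category.assoc, hh', Category.assoc]
      simp
    obtain ⟨ψ0, hψ0i, hψ0j⟩ := hdesc (h ≫ ιW) lP (by rw [← Category.assoc, hgh, hδ])
    have hψ0p : ψ0 ≫ pξ ≫ f = f0 := by
      apply hext
      · rw [← Category.assoc, hψ0i, Category.assoc, ses_w hWses, comp_zero, ses_w hE0]
      · rw [← Category.assoc, hψ0j, hlPc, hjf]
    have hg'f : (s ≫ ψ0 ≫ pξ) ≫ f = f := by
      simp only [Category.assoc]
      rw [hψ0p]
      try exact hfdef.symm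
    haveI := hmin (s ≫ ψ0 ≫ pξ) hg'f
    have hσ : (inv (s ≫ ψ0 ≫ pξ) ≫ s ≫ ψ0) ≫ pξ = 𝟙 E := by
      simp only [Category.assoc]
      exact IsIso.inv_hom_id _
    exact ses_retraction_of_section hξ _ hσ
  refine ⟨Tt, E, eT.symm.hom ≫ iT, f, hTt, hses', hEperp, ?_⟩
  intro X' hX' g''
  obtain ⟨V, κV, qV, vV, hVses, hκVv, hvf, hlift⟩ := ses_pullback hses' g''
  obtain ⟨ρ, hρ⟩ := hX' Tt hTt κV qV hVses
  obtain ⟨σ', hσ'⟩ := ses_section_of_retraction hVses ρ hρ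
  refine ⟨σ' ≫ vV, ?_⟩
  rw [Category.assoc, hvf, ← Category.assoc, hσ', Category.id_comp]

lemma part2b (hKS : KrullSchmidt A) (P : TorsionPair A)
    (hcov : CovariantlyFinite P.tors) (M : A) :
    ∃ (T' : A) (g : M ⟶ T'), IsLeftApprox P.tors g ∧ cokernel g ∈ perpE P := by
  obtain ⟨T0', g0, hT0', happ⟩ := hcov M
  obtain ⟨n, hLS⟩ := ks_localSum hKS T0'
  obtain ⟨E', r, s, hsr, hgeq, hlmin⟩ := left_min_version n T0' hLS M g0
  haveI : Epi r := epi_of_epi_fac hsr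
  obtain ⟨T'', hT'', ⟨eE⟩⟩ := torsion_quot P hT0' r
  set g : M ⟶ T'' := g0 ≫ r ≫ eE.hom with hgdef
  have happg : ∀ ⦃X'' : A⦄, X'' ∈ P.tors → ∀ t : M ⟶ X'', ∃ h : T'' ⟶ X'', g ≫ h = t := by
    intro X'' hX'' t
    obtain ⟨h0, hh0⟩ := happ hX'' t
    refine ⟨eE.inv ≫ s ≫ h0, ?_⟩
    rw [hgdef]
    simp only [Category.assoc, Iso.hom_inv_id_assoc]
    have h9 := congrArg (fun t' => t' ≫ h0) hgeq.symm
    simp only [Category.assoc] at h9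
    rw [h9, hh0]
  have hlming : LeftMinimal g := by
    intro v hv
    have h2 := congrArg (fun t => t ≫ eE.inv) hv
    simp only [Category.assoc] at h2
    rw [hgdef] at h2
    simp only [Category.assoc] at h2
    have h1 : (g0 ≫ r) ≫ (eE.hom ≫ v ≫ eE.inv) = g0 ≫ r := by
      simp only [Category.assoc]
      rw [h2]
      simp
    haveI := hlmin _ h1
    have h3 : v = eE.inv ≫ (eE.hom ≫ v ≫ eE.inv) ≫ eE.hom := by simp
    rw [h3]
    infer_instance
  refine ⟨T'', g, ⟨hT'', happg⟩, ?_⟩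
  intro T''' hT''' U iU pU hU
  set π : T'' ⟶ cokernel g := cokernel.π g with hπ
  obtain ⟨V, κ, q, v, hVses, hκv, hvp, hlift⟩ := ses_pullback hU π
  obtain ⟨TV, hTV, ⟨eV⟩⟩ :=
    torsion_ext P hVses ⟨T''', hT''', ⟨Iso.refl _⟩⟩ ⟨T'', hT'', ⟨Iso.refl _⟩⟩
  obtain ⟨m, hmv, hmq⟩ := hlift (0 : M ⟶ U) g
    (by rw [zero_comp, hπ]; exact (cokernel.condition g).symm)
  obtain ⟨h', hh'⟩ := happg hTV (m ≫ eV.hom)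
  set h : T'' ⟶ V := h' ≫ eV.inv with hhd
  have hgh : g ≫ h = m := by
    rw [hhd, ← Category.assoc, hh', Category.assoc]
    simp
  have hq : g ≫ (h ≫ q) = g := by rw [← Category.assoc, hgh, hmq]
  haveI := hlming (h ≫ q) hq
  set τ : T'' ⟶ U := h ≫ v with hτ
  have hτp : τ ≫ pU = (h ≫ q) ≫ π := by
    rw [hτ, Category.assoc, hvp, ← Category.assoc]
  have hgτ : g ≫ τ = 0 := by rw [hτ, ← Category.assoc, hgh, hmv]
  set σ : cokernel g ⟶ U := cokernel.desc g τ hgτ with hσ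
  have hπσ : π ≫ σ = τ := cokernel.π_desc _ _ _
  have hτ'0 : g ≫ inv (h ≫ q) ≫ π = 0 := by
    have h5 := congrArg (fun t => t ≫ inv (h ≫ q)) hq
    rw [Category.assoc, IsIso.hom_inv_id, Category.comp_id] at h5
    rw [← Category.assoc, ← h5]
    exact cokernel.condition g
  set ω : cokernel g ⟶ cokernel g := σ ≫ pU with hω
  have hπω : π ≫ ω = (h ≫ q) ≫ π := by
    rw [hω, ← Category.assoc, hπσ, hτp]
  set ω' : cokernel g ⟶ cokernel g := cokernel.desc g (inv (h ≫ q) ≫ π) hτ'0 with hω'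
  have hπω' : π ≫ ω' = inv (h ≫ q) ≫ π := cokernel.π_desc _ _ _
  haveI hπepi : Epi π := by rw [hπ]; infer_instance
  have hω'ω : ω' ≫ ω = 𝟙 _ := by
    rw [← cancel_epi π, ← Category.assoc, hπω', Category.assoc, hπω, ← Category.assoc,
      IsIso.inv_hom_id, Category.id_comp, Category.comp_id]
  have hsec : (ω' ≫ σ) ≫ pU = 𝟙 _ := by
    rw [Category.assoc, ← hω, hω'ω]
  obtain ⟨rr, hrr⟩ := ses_retraction_of_section hU _ hsec
  exact ⟨rr, hrr⟩

end WCP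

/-- For a Krull–Schmidt abelian category with enough projectives and a torsion pair with
`𝒯` covariantly finite, `(^{⊥_E}𝒯, 𝒯)` is a left-weak cotorsion pair:
(1) `Ext¹(C, T) = 0` for `C ∈ ^{⊥_E}𝒯`, `T ∈ 𝒯`;
(2a) every object `M` admits a short exact sequence `0 → T → E → M → 0` with `T ∈ 𝒯` and
`E → M` a right `^{⊥_E}𝒯`-approximation;
(2b) every object `M` admits a left `𝒯`-approximation `g : M ⟶ T'` whose cokernel lies
in `^{⊥_E}𝒯`. -/
theorem stmt15 [EnoughProjectives A] (hKS : KrullSchmidt A) (P : TorsionPair A)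
    (hcov : CovariantlyFinite P.tors) :
    (∀ C ∈ perpE P, ∀ T ∈ P.tors, Ext1Vanishes C T) ∧
    (∀ M : A, ∃ (T E : A) (i : T ⟶ E) (f : E ⟶ M),
      T ∈ P.tors ∧ IsShortExactSeq i f ∧ IsRightApprox (perpE P) f) ∧
    (∀ M : A, ∃ (T' : A) (g : M ⟶ T'),
      IsLeftApprox P.tors g ∧ cokernel g ∈ perpE P) := by
  exact ⟨fun C hC T hT => hC T hT,
    fun M => WCP.part2a hKS P hcov M,
    fun M => WCP.part2b hKS P hcov M⟩
end
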